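/- arXiv:1811.00304 — 4 statements merged into one kernel-verified Lean document; each statement's English description precedes it below -/
import Mathlib

section
/- Let M be the comonotone copula (law of (U,U), U uniform on [0,1]) and W the countermonotone copula (law of (U,1-U)). The Wasserstein-1 distance between M and W with respect to the cost c(u,v)=|u_1-v_1|+|u_2-v_2| equals 1/2. -/
open MeasureTheory Set
open scoped ENNReal

/-- The uniform distribution on `[0,1]`. -/
noncomputable def unif : Measure ℝ := volume.restrict (Set.Icc (0:ℝ) 1)

/-- The comonotone copula: the law of `(U,U)` for `U` uniform on `[0,1]`. -/
noncomputable def Mcop : Measure (ℝ × ℝ) := unif.map (fun u => (u, u))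

/-- The countermonotone copula: the law of `(U,1-U)` for `U` uniform on `[0,1]`. -/
noncomputable def Wcop : Measure (ℝ × ℝ) := unif.map (fun u => (u, 1 - u))

/-- Optimal transport cost between measures on `[0,1]²` with cost
`c(u,v) = |u₁-v₁| + |u₂-v₂|` (Wasserstein-1 w.r.t. the `L¹`-metric). -/
noncomputable def transportCost (μ ν : Measure (ℝ × ℝ)) : ℝ≥0∞ :=
  ⨅ (π : Measure ((ℝ × ℝ) × (ℝ × ℝ)))
    (_ : π.map Prod.fst = μ) (_ : π.map Prod.snd = ν),
    ∫⁻ q, ENNReal.ofReal (|q.1.1 - q.2.1| + |q.1.2 - q.2.2|) ∂π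

/-- A (bivariate) copula: a probability measure on `[0,1]²` with uniform marginals. -/
def IsCopula (C : Measure (ℝ × ℝ)) : Prop :=
  IsProbabilityMeasure C ∧ C.map Prod.fst = unif ∧ C.map Prod.snd = unif

section Aux

open intervalIntegral

lemma piece1 : ∫ x in (0:ℝ)..(1/2), (1 - 2*x) = 1/4 := by
  rw [integral_sub intervalIntegrable_const (by apply Continuous.intervalIntegrable; continuity),
    intervalIntegral.integral_const_mul, integral_id, intervalIntegral.integral_const]
  norm_num

lemma piece2 : ∫ x in (1/2:ℝ)..1, (2*x - 1) = 1/4 := by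
  rw [integral_sub (by apply Continuous.intervalIntegrable; continuity) intervalIntegrable_const,
    intervalIntegral.integral_const_mul, integral_id, intervalIntegral.integral_const]
  norm_num

lemma realint : ∫ x in (0:ℝ)..1, |2*x - 1| = 1/2 := by
  have h1 : ∫ x in (0:ℝ)..(1/2), |2*x-1| = ∫ x in (0:ℝ)..(1/2), (1 - 2*x) := by
    apply integral_congr
    intro x hx
    rw [uIcc_of_le (by norm_num)] at hx
    simp only
    rw [abs_of_nonpos (by nlinarith [hx.1, hx.2])]
    ring
  have h2 : ∫ x in (1/2:ℝ)..1, |2*x-1| = ∫ x in (1/2:ℝ)..1, (2*x - 1) := by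
    apply integral_congr
    intro x hx
    rw [uIcc_of_le (by norm_num)] at hx
    simp only
    rw [abs_of_nonneg (by nlinarith [hx.1, hx.2])]
  rw [← integral_add_adjacent_intervals (a := (0:ℝ)) (b := 1/2) (c := 1)
    ((Continuous.abs (by continuity)).intervalIntegrable _ _)
    ((Continuous.abs (by continuity)).intervalIntegrable _ _),
    h1, h2, piece1, piece2]
  norm_num

lemma lint_unif : ∫⁻ u, ENNReal.ofReal (|2*u - 1|) ∂unif = 1/2 := by
  have hc : Continuous (fun u : ℝ => |2*u - 1|) := Continuous.abs (by continuity)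
  have hint : Integrable (fun u : ℝ => |2*u - 1|) unif :=
    hc.continuousOn.integrableOn_compact isCompact_Icc
  rw [← ofReal_integral_eq_lintegral_ofReal hint
    (Filter.Eventually.of_forall fun x => abs_nonneg _)]
  have h : ∫ u, |2*u - 1| ∂unif = 1/2 := by
    rw [unif, MeasureTheory.integral_Icc_eq_integral_Ioc,
      ← intervalIntegral.integral_of_le (by norm_num : (0:ℝ) ≤ 1), realint]
  rw [h, ENNReal.ofReal_div_of_pos (by norm_num)]
  norm_num

lemma hm1 : Measurable (fun u : ℝ => (u, 1 - u)) :=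
  measurable_id.prodMk (measurable_const.sub measurable_id)

lemma hm2 : Measurable (fun u : ℝ => (u, u)) :=
  measurable_id.prodMk measurable_id

lemma hm0 : Measurable (fun u : ℝ => ((u, u), (u, 1 - u))) := hm2.prodMk hm1

lemma hcostm : Measurable (fun q : (ℝ×ℝ)×(ℝ×ℝ) =>
    ENNReal.ofReal (|q.1.1 - q.2.1| + |q.1.2 - q.2.2|)) := by
  apply Measurable.ennreal_ofReal; fun_prop

lemma hfm : Measurable (fun p : ℝ×ℝ => ENNReal.ofReal (|2 * p.1 - 1|)) := by
  apply Measurable.ennreal_ofReal; fun_prop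

end Aux

/-- The Wasserstein-1 distance (w.r.t. the `L¹` cost) between the
comonotone copula `M` and the countermonotone copula `W` equals `1/2`. -/
theorem transportCost_comonotone_countermonotone :
    transportCost Mcop Wcop = 1 / 2 := by
  apply le_antisymm
  · set π₀ : Measure ((ℝ × ℝ) × (ℝ × ℝ)) := unif.map (fun u => ((u, u), (u, 1 - u))) with hπ₀
    have h1 : π₀.map Prod.fst = Mcop := by
      rw [hπ₀, Measure.map_map measurable_fst hm0]; rfl
    have h2 : π₀.map Prod.snd = Wcop := by
      rw [hπ₀, Measure.map_map measurable_snd hm0]; rfl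
    refine iInf_le_of_le π₀ (iInf_le_of_le h1 (iInf_le_of_le h2 (le_of_eq ?_)))
    rw [hπ₀, lintegral_map hcostm hm0]
    calc ∫⁻ u, ENNReal.ofReal (|u - u| + |u - (1 - u)|) ∂unif
        = ∫⁻ u, ENNReal.ofReal (|2*u - 1|) ∂unif := by
          congr 1; funext u
          congr 1
          rw [sub_self, abs_zero, zero_add]
          congr 1; ring
      _ = 1/2 := lint_unif
  · refine le_iInf fun π => le_iInf fun h1 => le_iInf fun h2 => ?_
    have hdiag : ∀ᵐ q ∂π, q.1.2 = q.1.1 := by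
      have hs : MeasurableSet {p : ℝ × ℝ | p.2 = p.1} :=
        measurableSet_eq_fun measurable_snd measurable_fst
      have h : π ((Prod.fst : (ℝ×ℝ)×(ℝ×ℝ) → ℝ×ℝ) ⁻¹' {p : ℝ × ℝ | p.2 = p.1}ᶜ) = 0 := by
        rw [← Measure.map_apply measurable_fst hs.compl, h1, Mcop,
          Measure.map_apply hm2 hs.compl]
        have he : ((fun u : ℝ => (u, u)) ⁻¹' {p : ℝ × ℝ | p.2 = p.1}ᶜ) = ∅ := by
          ext u; simp
        simp [he]
      exact h
    have hanti : ∀ᵐ q ∂π, q.2.2 = 1 - q.2.1 := by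
      have hs : MeasurableSet {p : ℝ × ℝ | p.2 = 1 - p.1} :=
        measurableSet_eq_fun measurable_snd (measurable_const.sub measurable_fst)
      have h : π ((Prod.snd : (ℝ×ℝ)×(ℝ×ℝ) → ℝ×ℝ) ⁻¹' {p : ℝ × ℝ | p.2 = 1 - p.1}ᶜ) = 0 := by
        rw [← Measure.map_apply measurable_snd hs.compl, h2, Wcop,
          Measure.map_apply hm1 hs.compl]
        have he : ((fun u : ℝ => (u, 1 - u)) ⁻¹' {p : ℝ × ℝ | p.2 = 1 - p.1}ᶜ) = ∅ := by
          ext u; simp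
        simp [he]
      exact h
    have key : ∫⁻ q, ENNReal.ofReal (|2 * q.1.1 - 1|) ∂π
        ≤ ∫⁻ q, ENNReal.ofReal (|q.1.1 - q.2.1| + |q.1.2 - q.2.2|) ∂π := by
      refine lintegral_mono_ae ?_
      filter_upwards [hdiag, hanti] with q hq1 hq2
      apply ENNReal.ofReal_le_ofReal
      rw [hq1, hq2]
      have h : 2 * q.1.1 - 1 = (q.1.1 - q.2.1) + (q.1.1 - (1 - q.2.1)) := by ring
      rw [h]
      exact abs_add_le _ _
    refine le_trans (le_of_eq ?_) key
    have step : ∫⁻ q, ENNReal.ofReal (|2 * q.1.1 - 1|) ∂π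
        = ∫⁻ p, ENNReal.ofReal (|2 * p.1 - 1|) ∂(π.map Prod.fst) :=
      (lintegral_map hfm measurable_fst).symm
    rw [step, h1, Mcop, lintegral_map hfm hm2]
    exact lint_unif.symm
end

section
/- Discretization of couplings with bounded density: Let X_i be Polish spaces for i=1,...,d, μ_i ∈ P(X_i), ν a coupling of (μ_1,...,μ_d), and μ = μ_1 ⊗ ... ⊗ μ_d the product measure. Then there exist couplings ν^n of (μ_1,...,μ_d) and finite constants C_n > 0 such that ν^n converges weakly to ν, each ν^n is absolutely continuous with respect to μ, and dν^n/dμ ≤ C_n μ-almost surely. -/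
open MeasureTheory Set Filter
open scoped ENNReal Topology

namespace CouplingApprox

variable {d : ℕ} {X : Fin d → Type*} [∀ i, MeasurableSpace (X i)]

noncomputable def sigI (V : ∀ i, ℕ → Set (X i)) (n : ℕ) (i : Fin d) (z : X i) :
    Fin n → Bool := fun k => decide (z ∈ V i (k : ℕ)) (h := Classical.propDecidable _)

noncomputable def sigF (V : ∀ i, ℕ → Set (X i)) (n : ℕ) (x : ∀ i, X i) :
    Fin d → Fin n → Bool := fun i => sigI V n i (x i)

def cellI (V : ∀ i, ℕ → Set (X i)) (n : ℕ) (i : Fin d) (s : Fin n → Bool) : Set (X i) :=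
  sigI V n i ⁻¹' {s}

def cell (V : ∀ i, ℕ → Set (X i)) (n : ℕ) (t : Fin d → Fin n → Bool) : Set (∀ i, X i) :=
  sigF V n ⁻¹' {t}

omit [∀ i, MeasurableSpace (X i)] in
lemma mem_cellI {V : ∀ i, ℕ → Set (X i)} {n : ℕ} {i : Fin d} {s : Fin n → Bool} {z : X i} :
    z ∈ cellI V n i s ↔ ∀ k : Fin n, (z ∈ V i (k : ℕ) ↔ s k = true) := by
  simp only [cellI, mem_preimage, mem_singleton_iff, funext_iff, sigI]
  refine forall_congr' fun k => ?_
  cases hk : s k <;> simp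

omit [∀ i, MeasurableSpace (X i)] in
lemma cell_eq_pi (V : ∀ i, ℕ → Set (X i)) (n : ℕ) (t : Fin d → Fin n → Bool) :
    cell V n t = univ.pi fun i => cellI V n i (t i) := by
  ext x
  simp only [cell, cellI, mem_preimage, mem_singleton_iff, mem_univ_pi, sigF, funext_iff]

omit [∀ i, MeasurableSpace (X i)] in
lemma mem_cell_self (V : ∀ i, ℕ → Set (X i)) (n : ℕ) (x : ∀ i, X i) :
    x ∈ cell V n (sigF V n x) := rfl

lemma measurableSet_cellI {V : ∀ i, ℕ → Set (X i)} (hV : ∀ i k, MeasurableSet (V i k))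
    (n : ℕ) (i : Fin d) (s : Fin n → Bool) : MeasurableSet (cellI V n i s) := by
  have : cellI V n i s = ⋂ k : Fin n, {z | z ∈ V i (k : ℕ) ↔ s k = true} := by
    ext z; simp [mem_cellI]
  rw [this]
  refine MeasurableSet.iInter fun k => ?_
  have h2 : {z | z ∈ V i (k : ℕ) ↔ s k = true} =
      if s k = true then V i (k : ℕ) else (V i (k : ℕ))ᶜ := by
    cases hs : s k <;> ext z <;> simp
  rw [h2]
  split
  · exact hV i k
  · exact (hV i k).compl

lemma measurable_sigI {V : ∀ i, ℕ → Set (X i)} (hV : ∀ i k, MeasurableSet (V i k))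
    (n : ℕ) (i : Fin d) : Measurable (sigI V n i) :=
  measurable_to_countable' fun s => measurableSet_cellI hV n i s

lemma measurable_sigF {V : ∀ i, ℕ → Set (X i)} (hV : ∀ i k, MeasurableSet (V i k))
    (n : ℕ) : Measurable (sigF V n) :=
  measurable_pi_iff.2 fun i => (measurable_sigI hV n i).comp (measurable_pi_apply i)

lemma measurableSet_cell {V : ∀ i, ℕ → Set (X i)} (hV : ∀ i k, MeasurableSet (V i k))
    (n : ℕ) (t : Fin d → Fin n → Bool) : MeasurableSet (cell V n t) :=
  measurable_sigF hV n (measurableSet_singleton t)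

lemma sum_measure_cell {V : ∀ i, ℕ → Set (X i)} (hV : ∀ i k, MeasurableSet (V i k))
    (n : ℕ) (ρ : Measure (∀ i, X i)) :
    ∑ t : Fin d → Fin n → Bool, ρ (cell V n t) = ρ univ := by
  simp only [cell]
  rw [MeasureTheory.sum_measure_preimage_singleton Finset.univ
    (fun t _ => measurableSet_cell hV n t)]
  simp

/-- decomposition of a measure over the cells -/
lemma measure_eq_sum_restrict_cell {V : ∀ i, ℕ → Set (X i)} (hV : ∀ i k, MeasurableSet (V i k))
    (n : ℕ) (ρ : Measure (∀ i, X i)) :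
    ρ = ∑ t : Fin d → Fin n → Bool, ρ.restrict (cell V n t) := by
  ext s hs
  rw [Measure.finset_sum_apply]
  simp only [Measure.restrict_apply hs]
  symm
  calc ∑ t : Fin d → Fin n → Bool, ρ (s ∩ cell V n t)
      = ∑ t : Fin d → Fin n → Bool, ρ.restrict s (cell V n t) := by
        refine Finset.sum_congr rfl fun t _ => ?_
        rw [Measure.restrict_apply (measurableSet_cell hV n t), inter_comm]
    _ = ρ.restrict s univ := sum_measure_cell hV n _
    _ = ρ s := by rw [Measure.restrict_apply_univ]

/-- fiber sums: summing over cells with fixed `i`-th signature gives the preimage measure -/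
lemma sum_fiber_measure_cell {V : ∀ i, ℕ → Set (X i)} (hV : ∀ i k, MeasurableSet (V i k))
    (n : ℕ) (ρ : Measure (∀ i, X i)) (i : Fin d) (s : Fin n → Bool) :
    ∑ t ∈ Finset.filter (fun t : Fin d → Fin n → Bool => t i = s) Finset.univ,
      ρ (cell V n t) = ρ ((fun x => x i) ⁻¹' cellI V n i s) := by
  simp only [cell]
  rw [MeasureTheory.sum_measure_preimage_singleton _
    (fun t _ => measurableSet_cell hV n t)]
  congr 1
  ext x
  simp only [mem_preimage, Finset.coe_filter, Finset.mem_univ, true_and, mem_setOf_eq,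
    mem_singleton_iff, cellI]
  exact Iff.rfl


section Measures

variable {V : ∀ i, ℕ → Set (X i)} (μ : ∀ i, Measure (X i)) (ν : Measure (∀ i, X i))

/-- coefficient of the cell `t` in the approximating measure -/
noncomputable def coeff (V : ∀ i, ℕ → Set (X i)) (n : ℕ) (t : Fin d → Fin n → Bool) : ℝ≥0∞ :=
  ν (cell V n t) * ∏ i, (μ i (cellI V n i (t i)))⁻¹

/-- the approximating measure -/
noncomputable def nuA (V : ∀ i, ℕ → Set (X i)) (n : ℕ) : Measure (∀ i, X i) :=
  ∑ t : Fin d → Fin n → Bool, coeff μ ν V n t • (Measure.pi μ).restrict (cell V n t)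

variable [∀ i, IsProbabilityMeasure (μ i)] [IsProbabilityMeasure ν]
variable (hV : ∀ i k, MeasurableSet (V i k)) (hν : ∀ i, ν.map (fun x => x i) = μ i)

include hV hν in
lemma cell_le_cellI (n : ℕ) (t : Fin d → Fin n → Bool) (i : Fin d) :
    ν (cell V n t) ≤ μ i (cellI V n i (t i)) := by
  rw [← hν i, Measure.map_apply (measurable_pi_apply i) (measurableSet_cellI hV n i (t i))]
  refine measure_mono fun x hx => ?_
  rw [cell_eq_pi] at hx
  exact hx i (mem_univ i)

include hV hν in
lemma coeff_mul_pi_cell (n : ℕ) (t : Fin d → Fin n → Bool) :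
    coeff μ ν V n t * Measure.pi μ (cell V n t) = ν (cell V n t) := by
  have hpi : Measure.pi μ (cell V n t) = ∏ i, μ i (cellI V n i (t i)) := by
    rw [cell_eq_pi, Measure.pi_pi]
  rw [hpi]
  by_cases hc : ν (cell V n t) = 0
  · simp [coeff, hc]
  · have hpos : ∀ i, μ i (cellI V n i (t i)) ≠ 0 := fun i =>
      fun h0 => hc (le_antisymm (le_trans (cell_le_cellI μ ν hV hν n t i) h0.le) (zero_le))
    have hfin : ∀ i, μ i (cellI V n i (t i)) ≠ ∞ := fun i => measure_ne_top _ _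
    rw [coeff, mul_assoc, ← Finset.prod_mul_distrib]
    have : ∀ i ∈ Finset.univ, (μ i (cellI V n i (t i)))⁻¹ * μ i (cellI V n i (t i)) = 1 :=
      fun i _ => ENNReal.inv_mul_cancel (hpos i) (hfin i)
    rw [Finset.prod_congr rfl this, Finset.prod_const_one, mul_one]

include hV hν in
lemma coeff_lt_top (n : ℕ) (t : Fin d → Fin n → Bool) : coeff μ ν V n t < ∞ := by
  by_cases hc : ν (cell V n t) = 0
  · simp [coeff, hc]
  · have hpos : ∀ i, μ i (cellI V n i (t i)) ≠ 0 := fun i =>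
      fun h0 => hc (le_antisymm (le_trans (cell_le_cellI μ ν hV hν n t i) h0.le) (zero_le))
    refine ENNReal.mul_lt_top (measure_lt_top _ _) (ENNReal.prod_lt_top fun i _ => ?_)
    exact ENNReal.inv_lt_top.2 (zero_lt_iff.mpr (hpos i))

include hV hν in
lemma nuA_apply_le (n : ℕ) (s : Set (∀ i, X i)) :
    nuA μ ν V n s ≤ (∑ t : Fin d → Fin n → Bool, coeff μ ν V n t) * Measure.pi μ s := by
  rw [nuA, Measure.finset_sum_apply, Finset.sum_mul]
  refine Finset.sum_le_sum fun t _ => ?_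
  rw [Measure.smul_apply, smul_eq_mul]
  exact mul_le_mul_right (Measure.restrict_le_self _) _

include hV hν in
lemma nuA_univ (n : ℕ) : nuA μ ν V n univ = 1 := by
  rw [nuA, Measure.finset_sum_apply]
  have : ∀ t : Fin d → Fin n → Bool,
      (coeff μ ν V n t • (Measure.pi μ).restrict (cell V n t)) univ = ν (cell V n t) := by
    intro t
    rw [Measure.smul_apply, smul_eq_mul, Measure.restrict_apply_univ]
    exact coeff_mul_pi_cell μ ν hV hν n t
  rw [Finset.sum_congr rfl fun t _ => this t, sum_measure_cell hV n ν, measure_univ]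

lemma sum_measure_cellI {V : ∀ i, ℕ → Set (X i)} (hV : ∀ i k, MeasurableSet (V i k))
    (n : ℕ) (i : Fin d) (ρ : Measure (X i)) :
    ∑ s : Fin n → Bool, ρ (cellI V n i s) = ρ univ := by
  simp only [cellI]
  rw [MeasureTheory.sum_measure_preimage_singleton Finset.univ
    (fun s _ => measurableSet_cellI hV n i s)]
  simp

include hV hν in
lemma nuA_map_eval (n : ℕ) (i : Fin d) :
    (nuA μ ν V n).map (fun x => x i) = μ i := by
  ext s hs
  rw [Measure.map_apply (measurable_pi_apply i) hs, nuA, Measure.finset_sum_apply]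
  have hterm : ∀ t : Fin d → Fin n → Bool,
      (coeff μ ν V n t • (Measure.pi μ).restrict (cell V n t)) ((fun x => x i) ⁻¹' s)
      = ν (cell V n t) * ((μ i (cellI V n i (t i)))⁻¹ * μ i (s ∩ cellI V n i (t i))) := by
    intro t
    rw [Measure.smul_apply, smul_eq_mul,
      Measure.restrict_apply (hs.preimage (measurable_pi_apply i))]
    have hset : (fun x : ∀ j, X j => x i) ⁻¹' s ∩ cell V n t
        = univ.pi (Function.update (fun j => cellI V n j (t j)) i (s ∩ cellI V n i (t i))) := by
      rw [cell_eq_pi]; ext x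
      constructor
      · rintro ⟨hx1, hx2⟩ j _
        rcases eq_or_ne j i with rfl | hj
        · rw [Function.update_self]; exact ⟨hx1, hx2 j (mem_univ j)⟩
        · rw [Function.update_of_ne hj]; exact hx2 j (mem_univ j)
      · intro h
        constructor
        · have := h i (mem_univ i); rw [Function.update_self] at this; exact this.1
        · intro j _
          rcases eq_or_ne j i with rfl | hj
          · have := h j (mem_univ j); rw [Function.update_self] at this; exact this.2
          · have := h j (mem_univ j); rwa [Function.update_of_ne hj] at this
    rw [hset, Measure.pi_pi]
    by_cases hc : ν (cell V n t) = 0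
    · simp [coeff, hc]
    · have hpos : ∀ j, μ j (cellI V n j (t j)) ≠ 0 := fun j =>
        fun h0 => hc (le_antisymm (le_trans (cell_le_cellI μ ν hV hν n t j) h0.le) (zero_le))
      have hfin : ∀ j, μ j (cellI V n j (t j)) ≠ ∞ := fun j => measure_ne_top _ _
      have hprod : ∏ j : Fin d,
          μ j (Function.update (fun j => cellI V n j (t j)) i (s ∩ cellI V n i (t i)) j)
          = μ i (s ∩ cellI V n i (t i)) * ∏ j ∈ Finset.univ.erase i, μ j (cellI V n j (t j)) := by
        rw [← Finset.mul_prod_erase Finset.univ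
          (fun j => μ j (Function.update (fun j => cellI V n j (t j)) i
            (s ∩ cellI V n i (t i)) j)) (Finset.mem_univ i)]
        rw [Function.update_self]
        refine congrArg _ (Finset.prod_congr rfl fun j hj => ?_)
        rw [Function.update_of_ne (Finset.mem_erase.mp hj).1]
      rw [hprod, coeff,
        ← Finset.mul_prod_erase Finset.univ (fun j => (μ j (cellI V n j (t j)))⁻¹)
          (Finset.mem_univ i)]
      have hone : (∏ j ∈ Finset.univ.erase i, (μ j (cellI V n j (t j)))⁻¹)
          * ∏ j ∈ Finset.univ.erase i, μ j (cellI V n j (t j)) = 1 := by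
        rw [← Finset.prod_mul_distrib]
        rw [Finset.prod_congr rfl fun j _ => ENNReal.inv_mul_cancel (hpos j) (hfin j)]
        exact Finset.prod_const_one
      calc ν (cell V n t) * ((μ i (cellI V n i (t i)))⁻¹
              * ∏ j ∈ Finset.univ.erase i, (μ j (cellI V n j (t j)))⁻¹)
            * (μ i (s ∩ cellI V n i (t i)) * ∏ j ∈ Finset.univ.erase i, μ j (cellI V n j (t j)))
          = ν (cell V n t) * ((μ i (cellI V n i (t i)))⁻¹ * μ i (s ∩ cellI V n i (t i)))
            * ((∏ j ∈ Finset.univ.erase i, (μ j (cellI V n j (t j)))⁻¹)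
              * ∏ j ∈ Finset.univ.erase i, μ j (cellI V n j (t j))) := by ring
        _ = ν (cell V n t) * ((μ i (cellI V n i (t i)))⁻¹ * μ i (s ∩ cellI V n i (t i))) := by
            rw [hone, mul_one]
  rw [Finset.sum_congr rfl fun t _ => hterm t]
  rw [← Finset.sum_fiberwise Finset.univ (fun t : Fin d → Fin n → Bool => t i)
    (fun t => ν (cell V n t) * ((μ i (cellI V n i (t i)))⁻¹ * μ i (s ∩ cellI V n i (t i))))]
  have hfib : ∀ s' : Fin n → Bool,
      ∑ t ∈ Finset.filter (fun t : Fin d → Fin n → Bool => t i = s') Finset.univ,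
        ν (cell V n t) * ((μ i (cellI V n i (t i)))⁻¹ * μ i (s ∩ cellI V n i (t i)))
      = μ i (cellI V n i s') * ((μ i (cellI V n i s'))⁻¹ * μ i (s ∩ cellI V n i s')) := by
    intro s'
    have : ∀ t ∈ Finset.filter (fun t : Fin d → Fin n → Bool => t i = s') Finset.univ,
        ν (cell V n t) * ((μ i (cellI V n i (t i)))⁻¹ * μ i (s ∩ cellI V n i (t i)))
        = ν (cell V n t) * ((μ i (cellI V n i s'))⁻¹ * μ i (s ∩ cellI V n i s')) := by
      intro t ht
      rw [(Finset.mem_filter.mp ht).2]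
    rw [Finset.sum_congr rfl this, ← Finset.sum_mul, sum_fiber_measure_cell hV n ν i s',
      ← Measure.map_apply (measurable_pi_apply i) (measurableSet_cellI hV n i s'), hν i]
  rw [Finset.sum_congr rfl fun s' _ => hfib s']
  have hterm2 : ∀ s' : Fin n → Bool,
      μ i (cellI V n i s') * ((μ i (cellI V n i s'))⁻¹ * μ i (s ∩ cellI V n i s'))
      = μ i (s ∩ cellI V n i s') := by
    intro s'
    by_cases h0 : μ i (cellI V n i s') = 0
    · have : μ i (s ∩ cellI V n i s') = 0 :=
        measure_mono_null (inter_subset_right) h0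
      simp [h0, this]
    · rw [← mul_assoc, ENNReal.mul_inv_cancel h0 (measure_ne_top _ _), one_mul]
  rw [Finset.sum_congr rfl fun s' _ => hterm2 s']
  have : ∀ s' : Fin n → Bool, μ i (s ∩ cellI V n i s')
      = (μ i).restrict s (cellI V n i s') := by
    intro s'
    rw [Measure.restrict_apply (measurableSet_cellI hV n i s'), inter_comm]
  rw [Finset.sum_congr rfl fun s' _ => this s', sum_measure_cellI hV n i,
    Measure.restrict_apply_univ]

end Measures

/-- auxiliary integral estimate for measures supported on a set -/
lemma abs_integral_sub_le_diam {α : Type*} [MeasurableSpace α] [TopologicalSpace α]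
    [OpensMeasurableSpace α] (ρ : Measure α) [IsFiniteMeasure ρ]
    (f : BoundedContinuousFunction α ℝ) {S : Set α} (hS : ρ Sᶜ = 0) {x₀ : α} (hx₀ : x₀ ∈ S) :
    |∫ x, f x ∂ρ - (ρ univ).toReal * f x₀| ≤ (ρ univ).toReal * Metric.diam (f '' S) := by
  have hint : Integrable f ρ := f.integrable ρ
  have heq : ∫ x, f x ∂ρ - (ρ univ).toReal * f x₀ = ∫ x, (f x - f x₀) ∂ρ := by
    rw [integral_sub hint (integrable_const _), integral_const, smul_eq_mul]; rfl
  rw [heq]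
  have hb : ∀ᵐ x ∂ρ, ‖f x - f x₀‖ ≤ Metric.diam (f '' S) := by
    have hSae : ∀ᵐ x ∂ρ, x ∈ S := by
      rw [ae_iff]
      exact hS
    filter_upwards [hSae] with x hx
    rw [Real.norm_eq_abs, ← Real.dist_eq]
    exact Metric.dist_le_diam_of_mem
      (f.isBounded_range.subset (image_subset_range _ _)) ⟨x, hx, rfl⟩ ⟨x₀, hx₀, rfl⟩
  calc ‖∫ x, (f x - f x₀) ∂ρ‖ ≤ Metric.diam (f '' S) * (ρ univ).toReal :=
        norm_integral_le_of_norm_le_const hb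
    _ = (ρ univ).toReal * Metric.diam (f '' S) := mul_comm _ _

section Convergence

variable {V : ∀ i, ℕ → Set (X i)} (μ : ∀ i, Measure (X i)) (ν : Measure (∀ i, X i))
variable [∀ i, IsProbabilityMeasure (μ i)] [IsProbabilityMeasure ν]
variable [∀ i, TopologicalSpace (X i)] [OpensMeasurableSpace (∀ i, X i)]
variable (hV : ∀ i k, MeasurableSet (V i k)) (hν : ∀ i, ν.map (fun x => x i) = μ i)

include hV hν in
lemma abs_integral_nuA_sub (n : ℕ) (f : BoundedContinuousFunction (∀ i, X i) ℝ) :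
    |∫ x, f x ∂(nuA μ ν V n) - ∫ x, f x ∂ν|
      ≤ ∑ t : Fin d → Fin n → Bool,
          2 * (ν (cell V n t)).toReal * Metric.diam (f '' cell V n t) := by
  have hrfin : ∀ t : Fin d → Fin n → Bool, IsFiniteMeasure (ν.restrict (cell V n t)) :=
    fun t => ⟨by rw [Measure.restrict_apply_univ]; exact measure_lt_top _ _⟩
  have hterm_fin : ∀ t : Fin d → Fin n → Bool,
      IsFiniteMeasure (coeff μ ν V n t • (Measure.pi μ).restrict (cell V n t)) := by
    intro t
    refine ⟨?_⟩
    rw [Measure.smul_apply, smul_eq_mul, Measure.restrict_apply_univ,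
      coeff_mul_pi_cell μ ν hV hν n t]
    exact measure_lt_top _ _
  have h1 : ∫ x, f x ∂(nuA μ ν V n) = ∑ t : Fin d → Fin n → Bool,
      ∫ x, f x ∂(coeff μ ν V n t • (Measure.pi μ).restrict (cell V n t)) := by
    rw [nuA]
    exact integral_finset_sum_measure fun t _ => haveI := hterm_fin t; f.integrable _
  have h2 : ∫ x, f x ∂ν = ∑ t : Fin d → Fin n → Bool,
      ∫ x, f x ∂(ν.restrict (cell V n t)) := by
    conv_lhs => rw [measure_eq_sum_restrict_cell hV n ν]
    exact integral_finset_sum_measure fun t _ => haveI := hrfin t; f.integrable _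
  rw [h1, h2, ← Finset.sum_sub_distrib]
  refine (Finset.abs_sum_le_sum_abs _ _).trans (Finset.sum_le_sum fun t _ => ?_)
  by_cases hc : ν (cell V n t) = 0
  · have hcoeff : coeff μ ν V n t = 0 := by simp [coeff, hc]
    rw [hcoeff, zero_smul, integral_zero_measure,
      Measure.restrict_eq_zero.mpr hc, integral_zero_measure]
    simp [hc]
  · obtain ⟨x₀, hx₀⟩ := nonempty_of_measure_ne_zero hc
    haveI := hterm_fin t
    haveI := hrfin t
    set ρ₁ := coeff μ ν V n t • (Measure.pi μ).restrict (cell V n t) with hρ₁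
    have hρ₁c : ρ₁ (cell V n t)ᶜ = 0 := by
      rw [hρ₁, Measure.smul_apply, smul_eq_mul,
        Measure.restrict_apply (measurableSet_cell hV n t).compl, compl_inter_self, measure_empty,
        mul_zero]
    have hρ₁u : ρ₁ univ = ν (cell V n t) := by
      rw [hρ₁, Measure.smul_apply, smul_eq_mul, Measure.restrict_apply_univ,
        coeff_mul_pi_cell μ ν hV hν n t]
    have hρ₂c : (ν.restrict (cell V n t)) (cell V n t)ᶜ = 0 := by
      rw [Measure.restrict_apply (measurableSet_cell hV n t).compl, compl_inter_self,
        measure_empty]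
    have hρ₂u : (ν.restrict (cell V n t)) univ = ν (cell V n t) :=
      Measure.restrict_apply_univ _
    have e1 := abs_integral_sub_le_diam ρ₁ f hρ₁c hx₀
    have e2 := abs_integral_sub_le_diam (ν.restrict (cell V n t)) f hρ₂c hx₀
    rw [hρ₁u] at e1
    rw [hρ₂u] at e2
    have := abs_sub_le (∫ x, f x ∂ρ₁) ((ν (cell V n t)).toReal * f x₀)
      (∫ x, f x ∂(ν.restrict (cell V n t)))
    rw [abs_sub_comm ((ν (cell V n t)).toReal * f x₀)] at this
    calc |∫ x, f x ∂ρ₁ - ∫ x, f x ∂(ν.restrict (cell V n t))|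
        ≤ (ν (cell V n t)).toReal * Metric.diam (f '' cell V n t)
          + (ν (cell V n t)).toReal * Metric.diam (f '' cell V n t) := this.trans (add_le_add e1 e2)
      _ = 2 * (ν (cell V n t)).toReal * Metric.diam (f '' cell V n t) := by ring

include hV in
lemma sum_cell_diam_eq (n : ℕ) (f : BoundedContinuousFunction (∀ i, X i) ℝ) :
    ∑ t : Fin d → Fin n → Bool, (ν (cell V n t)).toReal * Metric.diam (f '' cell V n t)
      = ∫ x, Metric.diam (f '' cell V n (sigF V n x)) ∂ν := by
  haveI : IsProbabilityMeasure (ν.map (sigF V n)) :=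
    Measure.isProbabilityMeasure_map (measurable_sigF hV n).aemeasurable
  have hmap : ∫ x, Metric.diam (f '' cell V n (sigF V n x)) ∂ν
      = ∫ t, Metric.diam (f '' cell V n t) ∂(ν.map (sigF V n)) := by
    rw [integral_map (measurable_sigF hV n).aemeasurable
      (measurable_of_countable _).aestronglyMeasurable]
  rw [hmap, integral_fintype _]
  refine Finset.sum_congr rfl fun t _ => ?_
  rw [Measure.real, Measure.map_apply (measurable_sigF hV n) (measurableSet_singleton t), smul_eq_mul]
  rfl
  exact Integrable.of_finite

omit [∀ i, MeasurableSpace (X i)] in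
lemma mem_cell_sig_iff {n : ℕ} {x y : ∀ i, X i} :
    y ∈ cell V n (sigF V n x) ↔ ∀ i (k : Fin n), (y i ∈ V i (k : ℕ) ↔ x i ∈ V i (k : ℕ)) := by
  simp only [cell, mem_preimage, mem_singleton_iff, funext_iff, sigF, sigI, decide_eq_decide]

omit [∀ i, MeasurableSpace (X i)] in
lemma tendsto_diam_cell
    (hbasis : ∀ i (z : X i) (U : Set (X i)), IsOpen U → z ∈ U → ∃ k, z ∈ V i k ∧ V i k ⊆ U)
    (f : BoundedContinuousFunction (∀ i, X i) ℝ) (x : ∀ i, X i) :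
    Tendsto (fun n => Metric.diam (f '' cell V n (sigF V n x))) atTop (𝓝 0) := by
  rw [Metric.tendsto_atTop]
  intro ε hε
  have hG : f ⁻¹' Metric.ball (f x) (ε/4) ∈ 𝓝 x :=
    f.continuous.tendsto x (Metric.ball_mem_nhds _ (by positivity))
  rw [nhds_pi, Filter.mem_pi] at hG
  obtain ⟨I, hIfin, U, hU, hUsub⟩ := hG
  choose O hOsub hOopen hxO using fun i => mem_nhds_iff.mp (hU i)
  choose k hxk hkO using fun i => hbasis i (x i) (O i) (hOopen i) (hxO i)
  refine ⟨(Finset.univ.sup k) + 1, fun n hn => ?_⟩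
  have hsub : cell V n (sigF V n x) ⊆ f ⁻¹' Metric.ball (f x) (ε/4) := by
    intro y hy
    refine hUsub fun i _ => ?_
    have hki : k i < n :=
      lt_of_lt_of_le (Nat.lt_succ_of_le (Finset.le_sup (Finset.mem_univ i))) hn
    have hyV : y i ∈ V i (k i) :=
      (mem_cell_sig_iff.mp hy i ⟨k i, hki⟩).mpr (hxk i)
    exact hOsub i (hkO i hyV)
  have hdiam : Metric.diam (f '' cell V n (sigF V n x)) ≤ ε/2 := by
    apply Metric.diam_le_of_forall_dist_le (by positivity)
    rintro u ⟨y, hy, rfl⟩ v ⟨z, hz, rfl⟩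
    have h1 : dist (f y) (f x) < ε/4 := by simpa [Metric.mem_ball] using hsub hy
    have h2 : dist (f z) (f x) < ε/4 := by simpa [Metric.mem_ball] using hsub hz
    calc dist (f y) (f z) ≤ dist (f y) (f x) + dist (f x) (f z) := dist_triangle _ _ _
      _ = dist (f y) (f x) + dist (f z) (f x) := by rw [dist_comm (f x)]
      _ ≤ ε/4 + ε/4 := add_le_add h1.le h2.le
      _ = ε/2 := by ring
  rw [Real.dist_eq, sub_zero, abs_of_nonneg Metric.diam_nonneg]
  linarith

include hV hν in
lemma tendsto_integral_nuA
    (hbasis : ∀ i (z : X i) (U : Set (X i)), IsOpen U → z ∈ U → ∃ k, z ∈ V i k ∧ V i k ⊆ U)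
    (f : BoundedContinuousFunction (∀ i, X i) ℝ) :
    Tendsto (fun n => ∫ x, f x ∂(nuA μ ν V n)) atTop (𝓝 (∫ x, f x ∂ν)) := by
  rw [tendsto_iff_norm_sub_tendsto_zero]
  have hW : Tendsto (fun n => ∫ x, Metric.diam (f '' cell V n (sigF V n x)) ∂ν) atTop (𝓝 0) := by
    have h0 : (0:ℝ) = ∫ _x, (0:ℝ) ∂ν := by simp
    rw [h0]
    apply tendsto_integral_of_dominated_convergence (fun _ => Metric.diam (range f))
    · intro n
      exact ((measurable_of_countable
        (fun t : Fin d → Fin n → Bool => Metric.diam (f '' cell V n t))).comp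
        (measurable_sigF hV n)).aestronglyMeasurable
    · exact integrable_const _
    · intro n
      refine ae_of_all _ fun x => ?_
      rw [Real.norm_eq_abs, abs_of_nonneg Metric.diam_nonneg]
      exact Metric.diam_mono (image_subset_range _ _) f.isBounded_range
    · exact ae_of_all _ fun x => tendsto_diam_cell hbasis f x
  have hW2 : Tendsto (fun n =>
      2 * ∫ x, Metric.diam (f '' cell V n (sigF V n x)) ∂ν) atTop (𝓝 0) := by
    simpa using hW.const_mul 2
  refine squeeze_zero_norm (fun n => ?_) hW2
  rw [norm_norm, Real.norm_eq_abs]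
  calc |∫ x, f x ∂(nuA μ ν V n) - ∫ x, f x ∂ν|
      ≤ ∑ t : Fin d → Fin n → Bool,
          2 * (ν (cell V n t)).toReal * Metric.diam (f '' cell V n t) :=
        abs_integral_nuA_sub μ ν hV hν n f
    _ = 2 * ∑ t : Fin d → Fin n → Bool,
          (ν (cell V n t)).toReal * Metric.diam (f '' cell V n t) := by
        rw [Finset.mul_sum]; exact Finset.sum_congr rfl fun t _ => by ring
    _ = 2 * ∫ x, Metric.diam (f '' cell V n (sigF V n x)) ∂ν := by
        rw [sum_cell_diam_eq ν hV n f]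

end Convergence

end CouplingApprox


open CouplingApprox

/-- discretization of couplings with bounded density (Proposition 2(a)). -/
theorem coupling_approximation_bounded_density
    {d : ℕ} {X : Fin d → Type*}
    [∀ i, TopologicalSpace (X i)] [∀ i, PolishSpace (X i)]
    [∀ i, MeasurableSpace (X i)] [∀ i, BorelSpace (X i)]
    (μ : ∀ i, Measure (X i)) [∀ i, IsProbabilityMeasure (μ i)]
    (ν : Measure (∀ i, X i)) [IsProbabilityMeasure ν]
    (hν : ∀ i, ν.map (fun x => x i) = μ i) :
    ∃ (ν' : ℕ → Measure (∀ i, X i)) (C : ℕ → ℝ≥0∞),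
      (∀ n, IsProbabilityMeasure (ν' n)) ∧
      (∀ n i, (ν' n).map (fun x => x i) = μ i) ∧
      (∀ n, 0 < C n) ∧ (∀ n, C n < ⊤) ∧
      (∀ n, ν' n ≪ Measure.pi μ) ∧
      (∀ n, ∀ᵐ x ∂(Measure.pi μ), (ν' n).rnDeriv (Measure.pi μ) x ≤ C n) ∧
      (∀ f : BoundedContinuousFunction (∀ i, X i) ℝ,
        Tendsto (fun n => ∫ x, f x ∂(ν' n)) atTop (𝓝 (∫ x, f x ∂ν))) := by
  classical
  -- choose a countable basis in each coordinate
  have H : ∀ i, ∃ Vi : ℕ → Set (X i), (∀ k, IsOpen (Vi k)) ∧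
      ∀ (z : X i) (U : Set (X i)), IsOpen U → z ∈ U → ∃ k, z ∈ Vi k ∧ Vi k ⊆ U := by
    intro i
    obtain ⟨b, hbc, -, hb⟩ := TopologicalSpace.exists_countable_basis (X i)
    obtain ⟨g, hg⟩ := (hbc.insert univ).exists_eq_range (insert_nonempty _ _)
    refine ⟨g, fun k => ?_, fun z U hU hz => ?_⟩
    · have : g k ∈ insert univ b := hg ▸ mem_range_self k
      rcases mem_insert_iff.mp this with h | h
      · rw [h]; exact isOpen_univ
      · exact hb.isOpen h
    · obtain ⟨W, hWb, hzW, hWU⟩ := hb.exists_subset_of_mem_open hz hU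
      have : W ∈ range g := hg ▸ mem_insert_of_mem _ hWb
      obtain ⟨k, rfl⟩ := this
      exact ⟨k, hzW, hWU⟩
  choose V hVopen hVbasis using H
  have hVmeas : ∀ i k, MeasurableSet (V i k) := fun i k => (hVopen i k).measurableSet
  refine ⟨fun n => nuA μ ν V n,
    fun n => 1 + ∑ t : Fin d → Fin n → Bool, coeff μ ν V n t,
    fun n => ⟨nuA_univ μ ν hVmeas hν n⟩,
    fun n i => nuA_map_eval μ ν hVmeas hν n i,
    fun n => zero_lt_one.trans_le (le_add_right le_rfl),
    fun n => ?_, fun n => ?_, fun n => ?_,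
    fun f => tendsto_integral_nuA μ ν hVmeas hν hVbasis f⟩
  · exact ENNReal.add_lt_top.mpr ⟨ENNReal.one_lt_top,
      ENNReal.sum_lt_top.mpr fun t _ => coeff_lt_top μ ν hVmeas hν n t⟩
  · refine Measure.AbsolutelyContinuous.mk fun s _ h0 => ?_
    exact le_antisymm ((nuA_apply_le μ ν hVmeas hν n s).trans (by rw [h0, mul_zero]))
      (zero_le)
  · set C : ℝ≥0∞ := 1 + ∑ t : Fin d → Fin n → Bool, coeff μ ν V n t with hC
    have hC0 : C ≠ 0 := by
      rw [hC]
      exact (zero_lt_one.trans_le (le_add_right le_rfl)).ne'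
    have hCtop : C ≠ ∞ := by
      rw [hC]
      exact (ENNReal.add_lt_top.mpr ⟨ENNReal.one_lt_top,
        ENNReal.sum_lt_top.mpr fun t _ => coeff_lt_top μ ν hVmeas hν n t⟩).ne
    have hle : nuA μ ν V n ≤ C • Measure.pi μ := by
      refine Measure.le_intro fun s hs _ => ?_
      refine (nuA_apply_le μ ν hVmeas hν n s).trans ?_
      rw [Measure.smul_apply, smul_eq_mul]
      exact mul_le_mul_left le_add_self _
    haveI : IsFiniteMeasure (C • Measure.pi μ) := by
      refine ⟨?_⟩
      rw [Measure.smul_apply, smul_eq_mul]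
      exact ENNReal.mul_lt_top hCtop.lt_top (measure_lt_top _ _)
    haveI : IsProbabilityMeasure (nuA μ ν V n) := ⟨nuA_univ μ ν hVmeas hν n⟩
    have h1 := Measure.rnDeriv_le_one_of_le hle
    rw [Measure.ae_ennreal_smul_measure_eq hC0] at h1
    have h2 := Measure.rnDeriv_smul_right_of_ne_top (nuA μ ν V n) (Measure.pi μ) hC0 hCtop
    filter_upwards [h1, h2] with x hx1 hx2
    rw [hx2] at hx1
    simp only [Pi.smul_apply, smul_eq_mul, Pi.one_apply] at hx1
    calc (nuA μ ν V n).rnDeriv (Measure.pi μ) x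
        = (C * C⁻¹) * (nuA μ ν V n).rnDeriv (Measure.pi μ) x := by
          rw [ENNReal.mul_inv_cancel hC0 hCtop, one_mul]
      _ = C * (C⁻¹ * (nuA μ ν V n).rnDeriv (Measure.pi μ) x) := mul_assoc _ _ _
      _ ≤ C * 1 := mul_le_mul_right hx1 _
      _ = C := mul_one _
end

section
/- Inf-convolution representation of the penalized functional: With φ_1(f) := inf over λ ≥ 0, h_i ∈ C_b(X_i), g ∈ C_b(X) with g(x) ≥ f(x,y) − Σ h_i(y_i) − λc(x,y) of {λρ + Σ ∫ h_i dμ̄_i + ∫ g dμ̄}, and φ_2(f) := ∫ β_γ(f) dθ, it holds that φ_{θ,γ}(f) = inf over f̃ ∈ C_b(X²) of {φ_1(f̃) + φ_2(f − f̃)} for every f ∈ C_b(X²). -/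
open MeasureTheory Set Filter
open scoped ENNReal Topology Classical

section Penalized

variable {d : ℕ} {X : Fin d → Type*}
  [∀ i, TopologicalSpace (X i)] [∀ i, PolishSpace (X i)]
  [∀ i, MeasurableSpace (X i)] [∀ i, BorelSpace (X i)]

/-- The penalized dual functional `φ_{θ,γ}` of the paper (eq. (10)): the infimum over
`λ ≥ 0` and bounded continuous `h_i`, `g` of
`λρ + Σᵢ ∫ hᵢ dμ̄ᵢ + ∫ g dμ̄ + ∫ β_γ(f(x,y) − g(x) − Σᵢ hᵢ(yᵢ) − λc(x,y)) dθ`. -/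
noncomputable def phiPen (μbar : Measure (∀ i, X i))
    (θ : Measure ((∀ i, X i) × (∀ i, X i)))
    (c : (∀ i, X i) → (∀ i, X i) → ℝ) (ρ : ℝ) (βγ : ℝ → ℝ)
    (f : ((∀ i, X i) × (∀ i, X i)) → ℝ) : EReal :=
  sInf {w : EReal | ∃ (lam : ℝ) (h : ∀ i, X i → ℝ) (g : (∀ i, X i) → ℝ),
    0 ≤ lam ∧
    (∀ i, Continuous (h i)) ∧ (∀ i, ∃ M : ℝ, ∀ x, |h i x| ≤ M) ∧
    Continuous g ∧ (∃ M : ℝ, ∀ x, |g x| ≤ M) ∧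
    w = ((lam * ρ + (∑ i, ∫ x, h i x ∂(μbar.map (fun y => y i))) +
          ∫ x, g x ∂μbar : ℝ) : EReal) +
        (∫⁻ q, ENNReal.ofReal
          (βγ (f q - g q.1 - (∑ i, h i (q.2 i)) - lam * c q.1 q.2)) ∂θ).toEReal}

/-- The convex conjugate of `φ_{θ,γ}` over `C_b(X²)`. -/
noncomputable def phiPenConj (μbar : Measure (∀ i, X i))
    (θ : Measure ((∀ i, X i) × (∀ i, X i)))
    (c : (∀ i, X i) → (∀ i, X i) → ℝ) (ρ : ℝ) (βγ : ℝ → ℝ)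
    (π : Measure ((∀ i, X i) × (∀ i, X i))) : EReal :=
  ⨆ f : BoundedContinuousFunction ((∀ i, X i) × (∀ i, X i)) ℝ,
    ((∫ q, f q ∂π : ℝ) : EReal) - phiPen μbar θ c ρ βγ (fun q => f q)

/-- The value `∫ β_γ*(dπ/dθ) dθ` in `EReal`, with the convention that it is `+∞`
if `π` is not absolutely continuous w.r.t. `θ` or the integral is infinite. -/
noncomputable def penIntegral {Z : Type*} [MeasurableSpace Z] (θ : Measure Z)
    (βγstar : ℝ → ℝ) (π : Measure Z) : EReal :=
  if π ≪ θ ∧ Integrable (fun q => βγstar ((π.rnDeriv θ q).toReal)) θ then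
    ((∫ q, βγstar ((π.rnDeriv θ q).toReal) ∂θ : ℝ) : EReal)
  else ⊤

/-- The functional `φ₁`: the dual problem with pointwise inequality constraint
`g(x) ≥ f(x,y) − Σᵢ hᵢ(yᵢ) − λ c(x,y)`. -/
noncomputable def phiOne (μbar : Measure (∀ i, X i))
    (c : (∀ i, X i) → (∀ i, X i) → ℝ) (ρ : ℝ)
    (f : ((∀ i, X i) × (∀ i, X i)) → ℝ) : EReal :=
  sInf {w : EReal | ∃ (lam : ℝ) (h : ∀ i, X i → ℝ) (g : (∀ i, X i) → ℝ),
    0 ≤ lam ∧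
    (∀ i, Continuous (h i)) ∧ (∀ i, ∃ M : ℝ, ∀ x, |h i x| ≤ M) ∧
    Continuous g ∧ (∃ M : ℝ, ∀ x, |g x| ≤ M) ∧
    (∀ x y, f (x, y) - (∑ i, h i (y i)) - lam * c x y ≤ g x) ∧
    w = ((lam * ρ + (∑ i, ∫ x, h i x ∂(μbar.map (fun y => y i))) +
          ∫ x, g x ∂μbar : ℝ) : EReal)}

/-- The penalization functional `φ₂(f) = ∫ β_γ(f) dθ`. -/
noncomputable def phiTwo (θ : Measure ((∀ i, X i) × (∀ i, X i))) (βγ : ℝ → ℝ)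
    (f : ((∀ i, X i) × (∀ i, X i)) → ℝ) : EReal :=
  (∫⁻ q, ENNReal.ofReal (βγ (f q)) ∂θ).toEReal

private lemma ereal_le_coe_of_forall_eps {x : EReal} {y : ℝ}
    (h : ∀ ε : ℝ, 0 < ε → x ≤ ((y + ε : ℝ) : EReal)) : x ≤ (y : EReal) := by
  by_contra hc
  push_neg at hc
  induction x using EReal.rec with
  | bot => exact absurd bot_le hc.not_ge
  | coe x =>
    have hyx : y < x := EReal.coe_lt_coe_iff.mp hc
    have h1 := EReal.coe_le_coe_iff.mp (h ((x - y)/2) (by linarith))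
    linarith
  | top => exact absurd (h 1 one_pos) (EReal.coe_lt_top _).not_ge

private lemma ereal_le_sInf_add_of_forall {S : Set EReal} {a c : EReal}
    (hS : ∀ w ∈ S, a ≤ w + c) (hSbot : sInf S ≠ ⊥) (hc : c ≠ ⊥) :
    a ≤ sInf S + c := by
  induction c using EReal.rec with
  | bot => exact absurd rfl hc
  | top => rw [EReal.add_top_of_ne_bot hSbot]; exact le_top
  | coe c =>
    have h1 : a - (c : EReal) ≤ sInf S := by
      refine le_sInf fun w hw => ?_
      exact (EReal.sub_le_iff_le_add (.inl (EReal.coe_ne_bot c))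
        (.inl (EReal.coe_ne_top c))).mpr (hS w hw)
    exact (EReal.sub_le_iff_le_add (.inl (EReal.coe_ne_bot c))
      (.inl (EReal.coe_ne_top c))).mp h1

private lemma integrable_of_bdd_cont {Z : Type*} [MeasurableSpace Z] [TopologicalSpace Z]
    [OpensMeasurableSpace Z] {μ : Measure Z} [IsFiniteMeasure μ] {g : Z → ℝ}
    (hg : Continuous g) {M : ℝ} (hM : ∀ x, |g x| ≤ M) : Integrable g μ :=
  (integrable_const M).mono' hg.aestronglyMeasurable
    (Filter.Eventually.of_forall fun x => by simpa using hM x)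

private lemma ereal_coe_ennreal_eq {I : ℝ≥0∞} (hI : I ≠ ⊤) :
    I.toEReal = ((I.toReal : ℝ) : EReal) := by
  rw [← ENNReal.ofReal_toReal hI]
  rw [EReal.coe_ennreal_ofReal, ENNReal.toReal_ofReal ENNReal.toReal_nonneg,
    max_eq_left ENNReal.toReal_nonneg]

/-- inf-convolution representation of the penalized functional:
`φ_{θ,γ}(f) = inf_{f̃ ∈ C_b(X²)} { φ₁(f̃) + φ₂(f − f̃) }`. -/
theorem phiPen_eq_infConvolution
    (μbar : Measure (∀ i, X i)) [IsProbabilityMeasure μbar]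
    (θ : Measure ((∀ i, X i) × (∀ i, X i))) [IsProbabilityMeasure θ]
    (c : (∀ i, X i) → (∀ i, X i) → ℝ)
    (hc_cont : Continuous (Function.uncurry c))
    (hc_nonneg : ∀ x y, 0 ≤ c x y) (hc_diag : ∀ x, c x x = 0)
    (ρ : ℝ) (hρ : 0 < ρ)
    (β : ℝ → ℝ) (hβ_conv : ConvexOn ℝ Set.univ β) (hβ_mono : Monotone β)
    (hβ_diff : Differentiable ℝ β) (hβ_nonneg : ∀ x, 0 ≤ β x)
    (hβ_superlinear : Tendsto (fun x => β x / x) atTop atTop)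
    (γ : ℝ) (hγ : 0 < γ)
    (f : ((∀ i, X i) × (∀ i, X i)) → ℝ)
    (hf_cont : Continuous f) (hf_bdd : ∃ M : ℝ, ∀ q, |f q| ≤ M) :
    phiPen μbar θ c ρ (fun x => β (γ * x) / γ) f =
      sInf {w : EReal | ∃ ft : ((∀ i, X i) × (∀ i, X i)) → ℝ,
        Continuous ft ∧ (∃ M : ℝ, ∀ q, |ft q| ≤ M) ∧
        w = phiOne μbar c ρ ft +
            phiTwo θ (fun x => β (γ * x) / γ) (fun q => f q - ft q)} := by
  classical
  obtain ⟨Mf, hMf⟩ := hf_bdd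
  set βγ : ℝ → ℝ := fun x => β (γ * x) / γ with hβγ_def
  have hβγ_mono : Monotone βγ := fun a b hab =>
    (div_le_div_iff_of_pos_right hγ).mpr (hβ_mono (mul_le_mul_of_nonneg_left hab hγ.le))
  have hβγ_cont : Continuous βγ :=
    (hβ_diff.continuous.comp (continuous_const.mul continuous_id)).div_const γ
  refine le_antisymm ?_ ?_
  · -- phiPen ≤ sInf T
    refine le_sInf ?_
    rintro w ⟨ft, hft_cont, ⟨Mft, hMft⟩, rfl⟩
    have hlow : ((-Mft : ℝ) : EReal) ≤ phiOne μbar c ρ ft := by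
      refine le_sInf ?_
      rintro w ⟨lam, h, g, hlam, hh_cont, hh_bdd, hg_cont, hg_bdd, hconstr, rfl⟩
      rw [EReal.coe_le_coe_iff]
      choose Mh hMh using hh_bdd
      obtain ⟨Mg, hMg⟩ := hg_bdd
      have int_g : Integrable g μbar := integrable_of_bdd_cont hg_cont hMg
      have int_h : ∀ i, Integrable (fun x : ∀ i, X i => h i (x i)) μbar := fun i =>
        integrable_of_bdd_cont ((hh_cont i).comp (continuous_apply i)) (fun x => hMh i (x i))
      have int_hsum : Integrable (fun x : ∀ i, X i => ∑ i, h i (x i)) μbar :=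
        integrable_finset_sum _ (fun i _ => int_h i)
      have int_ftd : Integrable (fun x : ∀ i, X i => ft (x, x)) μbar :=
        integrable_of_bdd_cont (hft_cont.comp (continuous_id.prodMk continuous_id))
          (fun x => hMft (x, x))
      have key : ∫ x, (ft (x, x) - ∑ i, h i (x i)) ∂μbar ≤ ∫ x, g x ∂μbar := by
        refine integral_mono (int_ftd.sub int_hsum) int_g (fun x => ?_)
        have hx := hconstr x x
        rw [hc_diag x] at hx
        simp only [mul_zero, sub_zero] at hx
        exact hx
      rw [integral_sub int_ftd int_hsum, integral_finset_sum _ (fun i _ => int_h i)] at key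
      have hftd : (-Mft : ℝ) ≤ ∫ x, ft (x, x) ∂μbar := by
        have h2 : ∫ _x, (-Mft : ℝ) ∂μbar ≤ ∫ x, ft (x, x) ∂μbar :=
          integral_mono (integrable_const _) int_ftd (fun x => (abs_le.mp (hMft (x, x))).1)
        simpa using h2
      have hsum_eq : (∑ i, ∫ x, h i x ∂(μbar.map (fun y => y i)))
          = ∑ i, ∫ x, h i (x i) ∂μbar :=
        Finset.sum_congr rfl (fun i _ =>
          integral_map (measurable_pi_apply i).aemeasurable (hh_cont i).aestronglyMeasurable)
      have hlr : (0:ℝ) ≤ lam * ρ := mul_nonneg hlam hρ.le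
      rw [hsum_eq]
      linarith
    have hbot : phiOne μbar c ρ ft ≠ ⊥ := by
      intro hb
      rw [hb] at hlow
      exact (EReal.bot_lt_coe _).not_ge hlow
    have hphi2bot : phiTwo θ βγ (fun q => f q - ft q) ≠ ⊥ := by
      unfold phiTwo
      exact EReal.coe_ennreal_ne_bot _
    unfold phiPen phiOne at hbot ⊢
    refine ereal_le_sInf_add_of_forall ?_ hbot hphi2bot
    rintro w' ⟨lam, h, g, hlam, hh_cont, hh_bdd, hg_cont, hg_bdd, hconstr, rfl⟩
    refine le_trans (sInf_le ⟨lam, h, g, hlam, hh_cont, hh_bdd, hg_cont, hg_bdd, rfl⟩) ?_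
    refine add_le_add_right ?_ _
    unfold phiTwo
    refine EReal.coe_ennreal_le_coe_ennreal_iff.mpr (lintegral_mono fun q => ?_)
    have hcq := hconstr q.1 q.2
    rw [Prod.mk.eta] at hcq
    have hle : f q - g q.1 - (∑ i, h i (q.2 i)) - lam * c q.1 q.2 ≤ f q - ft q := by
      linarith
    exact ENNReal.ofReal_le_ofReal (hβγ_mono hle)
  · -- sInf T ≤ phiPen
    unfold phiPen
    refine le_sInf ?_
    rintro w ⟨lam, h, g, hlam, hh_cont, hh_bdd, hg_cont, hg_bdd, rfl⟩
    choose Mh hMh using hh_bdd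
    obtain ⟨Mg, hMg⟩ := hg_bdd
    set u : ((∀ i, X i) × (∀ i, X i)) → ℝ :=
      fun q => f q - g q.1 - (∑ i, h i (q.2 i)) - lam * c q.1 q.2 with hu_def
    have hu_cont : Continuous u := by
      refine ((hf_cont.sub (hg_cont.comp continuous_fst)).sub ?_).sub ?_
      · exact continuous_finset_sum _ fun i _ =>
          (hh_cont i).comp ((continuous_apply i).comp continuous_snd)
      · exact continuous_const.mul (hc_cont.comp (continuous_fst.prodMk continuous_snd))
    set C : ℝ := Mf + Mg + ∑ i, Mh i with hC_def
    have hu_le : ∀ q, u q ≤ C := by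
      intro q
      have h1 : f q ≤ Mf := (abs_le.mp (hMf q)).2
      have h2 : -Mg ≤ g q.1 := (abs_le.mp (hMg q.1)).1
      have h3 : -(∑ i, Mh i) ≤ ∑ i, h i (q.2 i) := by
        have h4 := Finset.sum_le_sum (s := (Finset.univ : Finset (Fin d)))
          (f := fun i => -Mh i) (g := fun i => h i (q.2 i))
          (fun i _ => (abs_le.mp (hMh i (q.2 i))).1)
        simpa using h4
      have h5 : (0:ℝ) ≤ lam * c q.1 q.2 := mul_nonneg hlam (hc_nonneg _ _)
      simp only [hu_def, hC_def]
      linarith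
    set C' : ℝ := max C 0 with hC'_def
    have hmax_le : ∀ (n : ℕ) q, max (u q) (-(n:ℝ)) ≤ C' := fun n q =>
      max_le ((hu_le q).trans (le_max_left C 0))
        ((neg_nonpos.mpr (Nat.cast_nonneg n)).trans (le_max_right C 0))
    have hint_bound : (∫⁻ _, ENNReal.ofReal (βγ C') ∂θ) = ENNReal.ofReal (βγ C') := by
      rw [lintegral_const, measure_univ, mul_one]
    have hgoal_eq : (∫⁻ q, ENNReal.ofReal
        (βγ (f q - g q.1 - (∑ i, h i (q.2 i)) - lam * c q.1 q.2)) ∂θ)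
        = ∫⁻ q, ENNReal.ofReal (βγ (u q)) ∂θ := rfl
    rw [hgoal_eq]
    set P : ℝ≥0∞ := ∫⁻ q, ENNReal.ofReal (βγ (u q)) ∂θ with hP_def
    have hP_le : P ≤ ENNReal.ofReal (βγ C') := by
      rw [hP_def, ← hint_bound]
      exact lintegral_mono fun q => ENNReal.ofReal_le_ofReal
        (hβγ_mono ((hu_le q).trans (le_max_left C 0)))
    have hP_ne_top : P ≠ ⊤ := ne_top_of_le_ne_top ENNReal.ofReal_ne_top hP_le
    have htend : Tendsto (fun n : ℕ => ∫⁻ q, ENNReal.ofReal (βγ (max (u q) (-(n:ℝ)))) ∂θ)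
        atTop (𝓝 P) := by
      rw [hP_def]
      refine tendsto_lintegral_of_dominated_convergence
        (fun _ => ENNReal.ofReal (βγ C')) ?_ ?_ ?_ ?_
      · intro n
        exact (ENNReal.continuous_ofReal.comp
          (hβγ_cont.comp (hu_cont.max continuous_const))).measurable
      · intro n
        exact Filter.Eventually.of_forall fun q =>
          ENNReal.ofReal_le_ofReal (hβγ_mono (hmax_le n q))
      · rw [hint_bound]; exact ENNReal.ofReal_ne_top
      · refine Filter.Eventually.of_forall fun q => ?_
        refine tendsto_atTop_of_eventually_const (i₀ := ⌈|u q|⌉₊) fun n hn => ?_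
        have h2 : |u q| ≤ (n:ℝ) := le_trans (Nat.le_ceil _) (Nat.cast_le.mpr hn)
        have h1 : -(n:ℝ) ≤ u q := by
          have := neg_abs_le (u q); linarith
        rw [max_eq_left h1]
    have main : sInf {w : EReal | ∃ ft : ((∀ i, X i) × (∀ i, X i)) → ℝ,
        Continuous ft ∧ (∃ M : ℝ, ∀ q, |ft q| ≤ M) ∧
        w = phiOne μbar c ρ ft + phiTwo θ βγ (fun q => f q - ft q)}
        ≤ (((lam * ρ + (∑ i, ∫ x, h i x ∂(μbar.map (fun y => y i))) +
            ∫ x, g x ∂μbar : ℝ) + P.toReal : ℝ) : EReal) := by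
      refine ereal_le_coe_of_forall_eps fun ε hε => ?_
      have hPP : P < P + ENNReal.ofReal ε :=
        ENNReal.lt_add_right hP_ne_top (ENNReal.ofReal_pos.mpr hε).ne'
      obtain ⟨n, hn⟩ := (htend.eventually_lt_const hPP).exists
      set ftn : ((∀ i, X i) × (∀ i, X i)) → ℝ :=
        fun q => f q - max (u q) (-(n:ℝ)) with hftn_def
      have hftn_cont : Continuous ftn := hf_cont.sub (hu_cont.max continuous_const)
      have hftn_bdd : ∃ M : ℝ, ∀ q, |ftn q| ≤ M := by
        refine ⟨Mf + (|C'| + n), fun q => abs_le.mpr ⟨?_, ?_⟩⟩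
        · have ha := (abs_le.mp (hMf q)).1
          have h2 := hmax_le n q
          have h3 : C' ≤ |C'| := le_abs_self _
          have h4 : (0:ℝ) ≤ (n:ℝ) := Nat.cast_nonneg n
          simp only [hftn_def]
          linarith
        · have ha := (abs_le.mp (hMf q)).2
          have h2 : -(n:ℝ) ≤ max (u q) (-(n:ℝ)) := le_max_right _ _
          have h3 : (0:ℝ) ≤ |C'| := abs_nonneg _
          simp only [hftn_def]
          linarith
      have hmem : phiOne μbar c ρ ftn + phiTwo θ βγ (fun q => f q - ftn q) ∈
          {w : EReal | ∃ ft : ((∀ i, X i) × (∀ i, X i)) → ℝ,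
            Continuous ft ∧ (∃ M : ℝ, ∀ q, |ft q| ≤ M) ∧
            w = phiOne μbar c ρ ft + phiTwo θ βγ (fun q => f q - ft q)} :=
        ⟨ftn, hftn_cont, hftn_bdd, rfl⟩
      refine le_trans (sInf_le hmem) ?_
      have h1 : phiOne μbar c ρ ftn
          ≤ (((lam * ρ + (∑ i, ∫ x, h i x ∂(μbar.map (fun y => y i))) +
              ∫ x, g x ∂μbar : ℝ)) : EReal) := by
        refine sInf_le ⟨lam, h, g, hlam, hh_cont, (fun i => ⟨Mh i, hMh i⟩),
          hg_cont, ⟨Mg, hMg⟩, ?_, rfl⟩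
        intro x y
        have h2 : u (x, y) ≤ max (u (x, y)) (-(n:ℝ)) := le_max_left _ _
        have h3 : u (x, y) = f (x, y) - g x - (∑ i, h i (y i)) - lam * c x y := rfl
        rw [h3] at h2
        simp only [hftn_def]
        linarith
      have h2 : phiTwo θ βγ (fun q => f q - ftn q)
          = (∫⁻ q, ENNReal.ofReal (βγ (max (u q) (-(n:ℝ)))) ∂θ).toEReal := by
        unfold phiTwo
        congr 1
        refine lintegral_congr fun q => ?_
        simp only [hftn_def, sub_sub_cancel]
      rw [h2]
      have h3 : (∫⁻ q, ENNReal.ofReal (βγ (max (u q) (-(n:ℝ)))) ∂θ).toEReal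
          ≤ ((P.toReal + ε : ℝ) : EReal) := by
        have h4 : (∫⁻ q, ENNReal.ofReal (βγ (max (u q) (-(n:ℝ)))) ∂θ)
            ≤ ENNReal.ofReal (P.toReal + ε) := by
          refine le_trans hn.le ?_
          rw [ENNReal.ofReal_add ENNReal.toReal_nonneg hε.le,
            ENNReal.ofReal_toReal hP_ne_top]
        calc (∫⁻ q, ENNReal.ofReal (βγ (max (u q) (-(n:ℝ)))) ∂θ).toEReal
            ≤ (ENNReal.ofReal (P.toReal + ε)).toEReal :=
              EReal.coe_ennreal_le_coe_ennreal_iff.mpr h4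
          _ = ((P.toReal + ε : ℝ) : EReal) := by
              rw [EReal.coe_ennreal_ofReal,
                max_eq_left (by positivity : (0:ℝ) ≤ P.toReal + ε)]
      calc phiOne μbar c ρ ftn
            + (∫⁻ q, ENNReal.ofReal (βγ (max (u q) (-(n:ℝ)))) ∂θ).toEReal
          ≤ (((lam * ρ + (∑ i, ∫ x, h i x ∂(μbar.map (fun y => y i))) +
              ∫ x, g x ∂μbar : ℝ)) : EReal) + ((P.toReal + ε : ℝ) : EReal) :=
            add_le_add h1 h3
        _ = (((lam * ρ + (∑ i, ∫ x, h i x ∂(μbar.map (fun y => y i))) +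
              ∫ x, g x ∂μbar : ℝ) + P.toReal + ε : ℝ) : EReal) := by
            norm_cast
            ring
    rw [ereal_coe_ennreal_eq hP_ne_top, ← EReal.coe_add]
    exact main

end Penalized
end

section
/- Finite-width error bound: In the setting with p ∈ ℕ, p ≥ 2, β_γ(x) = γ^{p-1}(x⁺)^p, c ∈ L^p(θ): if (λ, h_1,...,h_d, g) is an optimizer of φ_{θ,γ}(f) with sufficient moments and h_1^m,...,h_d^m, g^m are neural network functions approximating h_1,...,h_d, g within ε in the relevant L^p norms (with respect to μ̄_i, μ̄ and θ), then |φ_{θ,γ}(f) − φ^m_{θ,γ}(f)| ≤ C·ε where C depends only on f, λ, c, h_1,...,h_d, g. -/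
open MeasureTheory Set Filter
open scoped ENNReal Topology Classical

section Penalized

variable {d : ℕ} {X : Fin d → Type*}
  [∀ i, TopologicalSpace (X i)] [∀ i, PolishSpace (X i)]
  [∀ i, MeasurableSpace (X i)] [∀ i, BorelSpace (X i)]

/-- A one-hidden-layer feedforward neural network with `m` hidden neurons and
activation `σ`: `x ↦ Σ_j a_j σ(⟨w_j, x⟩ + b_j) + c₀`. -/
def IsNeuralNet {E : Type*} [NormedAddCommGroup E] [NormedSpace ℝ E]
    (σ : ℝ → ℝ) (m : ℕ) (h : E → ℝ) : Prop :=
  ∃ (a : Fin m → ℝ) (w : Fin m → E →L[ℝ] ℝ) (b : Fin m → ℝ) (c0 : ℝ),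
    ∀ x, h x = (∑ j, a j * σ (w j x + b j)) + c0

/-- The penalized dual functional with the optimization restricted to neural networks
of width `m`. -/
noncomputable def phiPenNN {d : ℕ} {N : Fin d → ℕ} (σ : ℝ → ℝ) (m : ℕ)
    (μbar : Measure (∀ i, Fin (N i) → ℝ))
    (θ : Measure ((∀ i, Fin (N i) → ℝ) × (∀ i, Fin (N i) → ℝ)))
    (c : (∀ i, Fin (N i) → ℝ) → (∀ i, Fin (N i) → ℝ) → ℝ) (ρ : ℝ) (βγ : ℝ → ℝ)
    (f : ((∀ i, Fin (N i) → ℝ) × (∀ i, Fin (N i) → ℝ)) → ℝ) : EReal :=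
  sInf {w : EReal | ∃ (lam : ℝ) (h : ∀ i, (Fin (N i) → ℝ) → ℝ)
      (g : (∀ i, Fin (N i) → ℝ) → ℝ),
    0 ≤ lam ∧ (∀ i, IsNeuralNet σ m (h i)) ∧ IsNeuralNet σ m g ∧
    w = ((lam * ρ + (∑ i, ∫ x, h i x ∂(μbar.map (fun y => y i))) +
          ∫ x, g x ∂μbar : ℝ) : EReal) +
        (∫⁻ q, ENNReal.ofReal
          (βγ (f q - g q.1 - (∑ i, h i (q.2 i)) - lam * c q.1 q.2)) ∂θ).toEReal}

-- real lemma 1: 0 ≤ y ≤ x → x^p ≤ y^p + p * x^(p-1) * (x-y)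
lemma pow_le_pow_add (p : ℕ) {x y : ℝ} (hy : 0 ≤ y) (hxy : y ≤ x) :
    x ^ p ≤ y ^ p + p * x ^ (p-1) * (x - y) := by
  have hx : 0 ≤ x := hy.trans hxy
  have h1 : x ^ p - y ^ p = (∑ i ∈ Finset.range p, x ^ i * y ^ (p - 1 - i)) * (x - y) :=
    (geom_sum₂_mul x y p).symm
  have h2 : (∑ i ∈ Finset.range p, x ^ i * y ^ (p - 1 - i)) ≤ p * x ^ (p-1) := by
    calc (∑ i ∈ Finset.range p, x ^ i * y ^ (p - 1 - i))
        ≤ ∑ i ∈ Finset.range p, x ^ (p-1) := by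
          apply Finset.sum_le_sum
          intro i hi
          calc x ^ i * y ^ (p - 1 - i) ≤ x ^ i * x ^ (p - 1 - i) := by
                apply mul_le_mul_of_nonneg_left (pow_le_pow_left₀ hy hxy _) (pow_nonneg hx _)
            _ = x ^ (i + (p - 1 - i)) := (pow_add x i _).symm
            _ = x ^ (p - 1) := by
                have : i < p := Finset.mem_range.mp hi
                congr 1
                omega
      _ = p * x ^ (p-1) := by simp [Finset.sum_const, Finset.card_range]
  nlinarith [mul_le_mul_of_nonneg_right h2 (sub_nonneg.2 hxy)]

-- real lemma 2: x^(p-1) * z ≤ x^p + z^p  for x,z ≥ 0, p ≥ 1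
lemma pow_mul_le (p : ℕ) (hp : 1 ≤ p) {x z : ℝ} (hx : 0 ≤ x) (hz : 0 ≤ z) :
    x ^ (p-1) * z ≤ x ^ p + z ^ p := by
  rcases le_total z x with h | h
  · have : x ^ (p-1) * z ≤ x ^ (p-1) * x := mul_le_mul_of_nonneg_left h (pow_nonneg hx _)
    calc x ^ (p-1) * z ≤ x ^ (p-1) * x := this
      _ = x ^ p := by rw [← pow_succ]; congr 1; omega
      _ ≤ x ^ p + z ^ p := le_add_of_nonneg_right (pow_nonneg hz _)
  · have : x ^ (p-1) * z ≤ z ^ (p-1) * z := by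
      apply mul_le_mul_of_nonneg_right (pow_le_pow_left₀ hx h _) hz
    calc x ^ (p-1) * z ≤ z ^ (p-1) * z := this
      _ = z ^ p := by rw [← pow_succ]; congr 1; omega
      _ ≤ x ^ p + z ^ p := le_add_of_nonneg_left (pow_nonneg hx _)

lemma nn_cont {E : Type*} [NormedAddCommGroup E] [NormedSpace ℝ E] {σ : ℝ → ℝ} {m : ℕ}
    {h : E → ℝ} (hσ : Continuous σ) (hh : IsNeuralNet σ m h) : Continuous h := by
  obtain ⟨a, w, b, c0, hf⟩ := hh
  have : h = fun x => (∑ j, a j * σ (w j x + b j)) + c0 := funext hf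
  rw [this]
  exact (continuous_finset_sum _ fun j _ =>
    continuous_const.mul (hσ.comp ((w j).continuous.add continuous_const))).add continuous_const

lemma nn_bdd {E : Type*} [NormedAddCommGroup E] [NormedSpace ℝ E] {σ : ℝ → ℝ} {m : ℕ}
    {h : E → ℝ} (hσ : ∃ M : ℝ, ∀ x, |σ x| ≤ M) (hh : IsNeuralNet σ m h) :
    ∃ M : ℝ, ∀ x, |h x| ≤ M := by
  obtain ⟨a, w, b, c0, hf⟩ := hh
  obtain ⟨M, hM⟩ := hσ
  refine ⟨(∑ j, |a j| * M) + |c0|, fun x => ?_⟩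
  rw [hf]
  calc |(∑ j, a j * σ (w j x + b j)) + c0| ≤ |∑ j, a j * σ (w j x + b j)| + |c0| :=
        abs_add_le _ _
    _ ≤ (∑ j, |a j * σ (w j x + b j)|) + |c0| := by
        gcongr; exact Finset.abs_sum_le_sum_abs _ _
    _ ≤ (∑ j, |a j| * M) + |c0| := by
        gcongr with j
        rw [abs_mul]
        exact mul_le_mul_of_nonneg_left (hM _) (abs_nonneg _)

lemma bdd_integrable {Z : Type*} [MeasurableSpace Z] {μ : Measure Z} [IsFiniteMeasure μ]
    {u : Z → ℝ} (hc : AEStronglyMeasurable u μ) {M : ℝ} (hM : ∀ x, |u x| ≤ M) :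
    Integrable u μ :=
  Integrable.mono' (integrable_const M) hc
    (ae_of_all _ fun x => by simpa using hM x)

lemma integral_abs_le_of_eLpNorm {Z : Type*} [MeasurableSpace Z] {μ : Measure Z}
    [IsProbabilityMeasure μ] (p : ℕ) (hp : 1 ≤ p) {u : Z → ℝ} (hu : Integrable u μ)
    {ε : ℝ} (hε : 0 ≤ ε) (hle : eLpNorm u p μ ≤ ENNReal.ofReal ε) :
    |∫ x, u x ∂μ| ≤ ε := by
  have h1 : ENNReal.ofReal |∫ x, u x ∂μ| ≤ ENNReal.ofReal ε := by
    calc ENNReal.ofReal |∫ x, u x ∂μ| ≤ ENNReal.ofReal (∫ x, ‖u x‖ ∂μ) :=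
          ENNReal.ofReal_le_ofReal (by simpa using norm_integral_le_integral_norm u)
      _ = ∫⁻ x, ‖u x‖ₑ ∂μ := ofReal_integral_norm_eq_lintegral_enorm hu
      _ = eLpNorm u 1 μ := (eLpNorm_one_eq_lintegral_enorm).symm
      _ ≤ eLpNorm u p μ := by
          apply eLpNorm_le_eLpNorm_of_exponent_le _ hu.aestronglyMeasurable
          exact_mod_cast Nat.one_le_cast.mpr hp
      _ ≤ ENNReal.ofReal ε := hle
  exact (ENNReal.ofReal_le_ofReal_iff hε).mp h1

lemma lintegral_pow_eq (p : ℕ) (hp : 1 ≤ p) {Z : Type*} [MeasurableSpace Z] (μ : Measure Z)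
    (v : Z → ℝ) (hv : ∀ q, 0 ≤ v q) :
    ∫⁻ q, ENNReal.ofReal (v q ^ p) ∂μ = (eLpNorm v p μ) ^ (p : ℝ) := by
  have hp0 : (p : ℝ≥0∞) ≠ 0 := by
    simp only [ne_eq, Nat.cast_eq_zero]
    omega
  have hpR : (0:ℝ) < p := by exact_mod_cast Nat.lt_of_lt_of_le Nat.zero_lt_one hp
  rw [eLpNorm_eq_lintegral_rpow_enorm_toReal hp0 (by simp), ENNReal.toReal_natCast, one_div,
    ENNReal.rpow_inv_rpow hpR.ne']
  refine lintegral_congr fun q => ?_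
  have h1 : ‖v q‖ₑ = ENNReal.ofReal (v q) := by
    rw [← ofReal_norm, Real.norm_eq_abs, abs_of_nonneg (hv q)]
  rw [h1, ENNReal.ofReal_rpow_of_nonneg (hv q) hpR.le, Real.rpow_natCast]

lemma ennreal_toEReal_eq {x : ℝ≥0∞} (hx : x ≠ ⊤) : x.toEReal = ((x.toReal : ℝ) : EReal) := by
  conv_lhs => rw [← ENNReal.ofReal_toReal hx]
  rw [EReal.coe_ennreal_ofReal, max_eq_left ENNReal.toReal_nonneg]

lemma pointwise_pen (p : ℕ) (hp : 2 ≤ p) {γ ε : ℝ} (hγ : 0 < γ) (hε : 0 < ε) (T δ : ℝ) :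
    γ^(p-1) * max (T + δ) 0 ^ p ≤ γ^(p-1) * max T 0 ^ p
      + γ^(p-1) * p * ε * (max T 0 + |δ|)^p + γ^(p-1) * p / ε^(p-1) * |δ|^p := by
  have hp1 : 1 ≤ p := le_trans one_le_two hp
  set b := max T 0 with hb'
  set u := |δ| with hu'
  have hb : 0 ≤ b := le_max_right _ _
  have hu : 0 ≤ u := abs_nonneg _
  have ha0 : 0 ≤ max (T + δ) 0 := le_max_right _ _
  have ha : max (T + δ) 0 ≤ b + u := by
    apply max_le _ (by linarith)
    have h1 : T ≤ b := le_max_left _ _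
    have h2 : δ ≤ u := le_abs_self _
    linarith
  have h1 : max (T + δ) 0 ^ p ≤ (b + u) ^ p := pow_le_pow_left₀ ha0 ha p
  have h2 : (b + u) ^ p ≤ b ^ p + p * (b + u) ^ (p-1) * u := by
    have := pow_le_pow_add p hb (le_add_of_nonneg_right hu : b ≤ b + u)
    have h3 : b + u - b = u := by ring
    rw [h3] at this
    exact this
  have h3 : (b + u) ^ (p-1) * u ≤ ε * (b + u) ^ p + u ^ p / ε ^ (p-1) := by
    have key := pow_mul_le p hp1 (add_nonneg hb hu) (div_nonneg hu hε.le)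
    have h4 : (b + u) ^ (p-1) * u = ε * ((b + u) ^ (p-1) * (u / ε)) := by
      field_simp
    rw [h4]
    calc ε * ((b + u) ^ (p-1) * (u / ε)) ≤ ε * ((b + u) ^ p + (u / ε) ^ p) :=
          mul_le_mul_of_nonneg_left key hε.le
      _ = ε * (b + u) ^ p + u ^ p / ε ^ (p-1) := by
          have hεp : ε ^ p = ε ^ (p-1) * ε := by
            rw [← pow_succ]
            congr 1
            omega
          rw [div_pow, mul_add]
          congr 1
          rw [hεp]
          field_simp
  have hγp : (0:ℝ) ≤ γ ^ (p-1) := by positivity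
  have hmain : max (T + δ) 0 ^ p ≤ b ^ p + p * ε * (b + u) ^ p + p / ε ^ (p-1) * u ^ p := by
    have h5 : (p:ℝ) * ((b + u) ^ (p-1) * u) ≤ (p:ℝ) * (ε * (b + u) ^ p + u ^ p / ε ^ (p-1)) :=
      mul_le_mul_of_nonneg_left h3 (by positivity)
    have h6 : (0:ℝ) < ε ^ (p-1) := by positivity
    calc max (T + δ) 0 ^ p ≤ (b + u) ^ p := h1
      _ ≤ b ^ p + p * (b + u) ^ (p-1) * u := h2
      _ ≤ b ^ p + p * ε * (b + u) ^ p + p / ε ^ (p-1) * u ^ p := by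
          rw [mul_assoc] at *
          have : (p:ℝ) / ε ^ (p-1) * u ^ p = p * (u ^ p / ε ^ (p-1)) := by ring
          rw [this]
          nlinarith [h5]
  calc γ^(p-1) * max (T + δ) 0 ^ p
      ≤ γ^(p-1) * (b ^ p + p * ε * (b + u) ^ p + p / ε ^ (p-1) * u ^ p) :=
        mul_le_mul_of_nonneg_left hmain hγp
    _ = γ^(p-1) * b ^ p + γ^(p-1) * p * ε * (b + u)^p + γ^(p-1) * p / ε^(p-1) * u^p := by
        ring

set_option maxHeartbeats 2000000 in
/-- finite-width error bound (Remark 2): if `(λ, h, g)` is an optimizer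
of `φ_{θ,γ}(f)` with sufficient moments and the neural networks approximate
`h₁,...,h_d, g` within `ε` in the relevant `L^p` norms, then
`|φ_{θ,γ}(f) − φ^m_{θ,γ}(f)| ≤ C·ε` for a constant `C` depending only on
`f, λ, c, h₁,...,h_d, g`. -/
theorem nn_finite_width_error_bound
    {d : ℕ} (N : Fin d → ℕ)
    (μbar : Measure (∀ i, Fin (N i) → ℝ)) [IsProbabilityMeasure μbar]
    (θ : Measure ((∀ i, Fin (N i) → ℝ) × (∀ i, Fin (N i) → ℝ))) [IsProbabilityMeasure θ]
    (c : (∀ i, Fin (N i) → ℝ) → (∀ i, Fin (N i) → ℝ) → ℝ)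
    (hc_cont : Continuous (Function.uncurry c))
    (hc_nonneg : ∀ x y, 0 ≤ c x y) (hc_diag : ∀ x, c x x = 0)
    (ρ : ℝ) (hρ : 0 < ρ) (γ : ℝ) (hγ : 0 < γ)
    (p : ℕ) (hp : 2 ≤ p)
    (hcLp : MemLp (fun q => c q.1 q.2) p θ)
    (σ : ℝ → ℝ) (hσ_cont : Continuous σ) (hσ_bdd : ∃ M : ℝ, ∀ x, |σ x| ≤ M)
    (hσ_nonconst : ∃ x y, σ x ≠ σ y)
    (f : (∀ i, Fin (N i) → ℝ) → ℝ)
    (hf_cont : Continuous f) (hf_bdd : ∃ M : ℝ, ∀ x, |f x| ≤ M)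
    -- the optimizer (λ, h, g) of φ_{θ,γ}(f), with sufficient moments
    (lam : ℝ) (h : ∀ i, (Fin (N i) → ℝ) → ℝ) (g : (∀ i, Fin (N i) → ℝ) → ℝ)
    (hlam_nonneg : 0 ≤ lam)
    (hh_cont : ∀ i, Continuous (h i)) (hh_bdd : ∀ i, ∃ M : ℝ, ∀ x, |h i x| ≤ M)
    (hg_cont : Continuous g) (hg_bdd : ∃ M : ℝ, ∀ x, |g x| ≤ M)
    (hmoments : MemLp
      (fun q => f q.2 - g q.1 - (∑ i, h i (q.2 i)) - lam * c q.1 q.2) p θ)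
    (hopt : ((lam * ρ + (∑ i, ∫ x, h i x ∂(μbar.map (fun y => y i))) +
          ∫ x, g x ∂μbar : ℝ) : EReal) +
        (∫⁻ q, ENNReal.ofReal
          ((γ : ℝ) ^ (p - 1) * max (f q.2 - g q.1 - (∑ i, h i (q.2 i)) -
            lam * c q.1 q.2) 0 ^ p) ∂θ).toEReal =
      phiPen μbar θ c ρ (fun x => γ ^ (p - 1) * max x 0 ^ p) (fun q => f q.2)) :
    ∃ C : ℝ, 0 ≤ C ∧
      ∀ ε : ℝ, 0 < ε → ε ≤ 1 →
      ∀ m : ℕ, ∀ hm : ∀ i, (Fin (N i) → ℝ) → ℝ, ∀ gm : (∀ i, Fin (N i) → ℝ) → ℝ,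
        (∀ i, IsNeuralNet σ m (hm i)) → IsNeuralNet σ m gm →
        (∀ i, eLpNorm (fun x => h i x - hm i x) p (μbar.map (fun y => y i)) ≤
          ENNReal.ofReal ε) →
        (∀ i, eLpNorm (fun q => h i (q.2 i) - hm i (q.2 i)) p θ ≤ ENNReal.ofReal ε) →
        eLpNorm (fun x => g x - gm x) p μbar ≤ ENNReal.ofReal ε →
        eLpNorm (fun q => g q.1 - gm q.1) p θ ≤ ENNReal.ofReal ε →
        (phiPenNN σ m μbar θ c ρ (fun x => γ ^ (p - 1) * max x 0 ^ p) (fun q => f q.2) ≤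
            phiPen μbar θ c ρ (fun x => γ ^ (p - 1) * max x 0 ^ p) (fun q => f q.2) +
              ((C * ε : ℝ) : EReal)) ∧
          (phiPen μbar θ c ρ (fun x => γ ^ (p - 1) * max x 0 ^ p) (fun q => f q.2) ≤
            phiPenNN σ m μbar θ c ρ (fun x => γ ^ (p - 1) * max x 0 ^ p) (fun q => f q.2) +
              ((C * ε : ℝ) : EReal)) := by
  classical
  have hp1 : 1 ≤ p := le_trans one_le_two hp
  have hpE : (1:ℝ≥0∞) ≤ (p:ℝ≥0∞) := by exact_mod_cast hp1
  have hpR : (0:ℝ) < (p:ℝ) := by exact_mod_cast Nat.lt_of_lt_of_le Nat.zero_lt_one hp1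
  set M0 : ℝ := (eLpNorm (fun q : (∀ i, Fin (N i) → ℝ) × (∀ i, Fin (N i) → ℝ) =>
    f q.2 - g q.1 - (∑ i, h i (q.2 i)) - lam * c q.1 q.2) p θ).toReal with hM0def
  have hM0nn : 0 ≤ M0 := ENNReal.toReal_nonneg
  have hγp : (0:ℝ) ≤ γ ^ (p-1) := by positivity
  have hCnn : (0:ℝ) ≤ (d+1) + γ^(p-1) * p * ((M0 + d + 1)^p + (d+1)^p) := by
    have h1 : (0:ℝ) ≤ (M0 + d + 1)^p := pow_nonneg (by positivity) _
    have h2 : (0:ℝ) ≤ ((d:ℝ)+1)^p := by positivity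
    have h3 : (0:ℝ) ≤ γ^(p-1) * p := by positivity
    nlinarith
  refine ⟨(d+1) + γ^(p-1) * p * ((M0 + d + 1)^p + (d+1)^p), hCnn, ?_⟩
  intro ε hε hε1 m hm gm hNNh hNNg happrox1 happrox2 happroxg1 happroxg2
  have hc2 : Continuous fun q : (∀ i, Fin (N i) → ℝ) × (∀ i, Fin (N i) → ℝ) =>
      c q.1 q.2 := hc_cont
  have hhm_cont : ∀ i, Continuous (hm i) := fun i => nn_cont hσ_cont (hNNh i)
  have hhm_bdd : ∀ i, ∃ M : ℝ, ∀ x, |hm i x| ≤ M := fun i => nn_bdd hσ_bdd (hNNh i)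
  have hgm_cont : Continuous gm := nn_cont hσ_cont hNNg
  have hgm_bdd : ∃ M : ℝ, ∀ x, |gm x| ≤ M := nn_bdd hσ_bdd hNNg
  have hTcont : Continuous fun q : (∀ i, Fin (N i) → ℝ) × (∀ i, Fin (N i) → ℝ) =>
      f q.2 - g q.1 - (∑ i, h i (q.2 i)) - lam * c q.1 q.2 := by
    refine (((hf_cont.comp continuous_snd).sub (hg_cont.comp continuous_fst)).sub
      (continuous_finset_sum _ fun i _ =>
        (hh_cont i).comp ((continuous_apply i).comp continuous_snd))).sub
      (continuous_const.mul hc2)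
  have hδcont : Continuous fun q : (∀ i, Fin (N i) → ℝ) × (∀ i, Fin (N i) → ℝ) =>
      (g q.1 - gm q.1) + ∑ i, (h i (q.2 i) - hm i (q.2 i)) := by
    refine ((hg_cont.comp continuous_fst).sub (hgm_cont.comp continuous_fst)).add
      (continuous_finset_sum _ fun i _ =>
        ((hh_cont i).comp ((continuous_apply i).comp continuous_snd)).sub
          ((hhm_cont i).comp ((continuous_apply i).comp continuous_snd)))
  have hμi : ∀ i, IsProbabilityMeasure (μbar.map (fun y => y i)) := fun i =>
    Measure.isProbabilityMeasure_map (measurable_pi_apply i).aemeasurable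
  have hinth : ∀ i, Integrable (h i) (μbar.map (fun y => y i)) := fun i => by
    obtain ⟨M, hM⟩ := hh_bdd i
    exact bdd_integrable (hh_cont i).aestronglyMeasurable hM
  have hinthm : ∀ i, Integrable (hm i) (μbar.map (fun y => y i)) := fun i => by
    obtain ⟨M, hM⟩ := hhm_bdd i
    exact bdd_integrable (hhm_cont i).aestronglyMeasurable hM
  have hintg : Integrable g μbar := by
    obtain ⟨M, hM⟩ := hg_bdd
    exact bdd_integrable hg_cont.aestronglyMeasurable hM
  have hintgm : Integrable gm μbar := by
    obtain ⟨M, hM⟩ := hgm_bdd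
    exact bdd_integrable hgm_cont.aestronglyMeasurable hM
  -- linear part bounds
  have hlin_i : ∀ i, ∫ x, hm i x ∂(μbar.map (fun y => y i)) ≤
      (∫ x, h i x ∂(μbar.map (fun y => y i))) + ε := fun i => by
    have habs := integral_abs_le_of_eLpNorm p hp1 (u := fun x => h i x - hm i x)
      ((hinth i).sub (hinthm i)) hε.le (happrox1 i)
    rw [integral_sub (hinth i) (hinthm i)] at habs
    linarith [(abs_le.mp habs).1]
  have hling : ∫ x, gm x ∂μbar ≤ (∫ x, g x ∂μbar) + ε := by
    have habs := integral_abs_le_of_eLpNorm p hp1 (u := fun x => g x - gm x)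
      (hintg.sub hintgm) hε.le happroxg1
    rw [integral_sub hintg hintgm] at habs
    linarith [(abs_le.mp habs).1]
  -- δ bound in L^p(θ)
  have hδnorm : eLpNorm (fun q : (∀ i, Fin (N i) → ℝ) × (∀ i, Fin (N i) → ℝ) =>
      (g q.1 - gm q.1) + ∑ i, (h i (q.2 i) - hm i (q.2 i))) p θ ≤ ENNReal.ofReal ((d+1)*ε) := by
    have hsum_eq : (fun q : (∀ i, Fin (N i) → ℝ) × (∀ i, Fin (N i) → ℝ) =>
        ∑ i, (h i (q.2 i) - hm i (q.2 i))) =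
        ∑ i, (fun q : (∀ i, Fin (N i) → ℝ) × (∀ i, Fin (N i) → ℝ) =>
          h i (q.2 i) - hm i (q.2 i)) := by
      funext q; simp
    have hmeas1 : AEStronglyMeasurable
        (fun q : (∀ i, Fin (N i) → ℝ) × (∀ i, Fin (N i) → ℝ) => g q.1 - gm q.1) θ :=
      ((hg_cont.comp continuous_fst).sub (hgm_cont.comp continuous_fst)).aestronglyMeasurable
    have hmeas2 : AEStronglyMeasurable
        (fun q : (∀ i, Fin (N i) → ℝ) × (∀ i, Fin (N i) → ℝ) =>
          ∑ i, (h i (q.2 i) - hm i (q.2 i))) θ :=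
      (continuous_finset_sum _ fun i _ =>
        ((hh_cont i).comp ((continuous_apply i).comp continuous_snd)).sub
          ((hhm_cont i).comp ((continuous_apply i).comp continuous_snd))).aestronglyMeasurable
    calc eLpNorm (fun q : (∀ i, Fin (N i) → ℝ) × (∀ i, Fin (N i) → ℝ) => (g q.1 - gm q.1) + ∑ i, (h i (q.2 i) - hm i (q.2 i))) p θ
        ≤ eLpNorm (fun q : (∀ i, Fin (N i) → ℝ) × (∀ i, Fin (N i) → ℝ) =>
            g q.1 - gm q.1) p θ +
          eLpNorm (fun q : (∀ i, Fin (N i) → ℝ) × (∀ i, Fin (N i) → ℝ) =>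
            ∑ i, (h i (q.2 i) - hm i (q.2 i))) p θ := eLpNorm_add_le hmeas1 hmeas2 hpE
      _ ≤ ENNReal.ofReal ε + ∑ i, eLpNorm
            (fun q : (∀ i, Fin (N i) → ℝ) × (∀ i, Fin (N i) → ℝ) =>
              h i (q.2 i) - hm i (q.2 i)) p θ := by
          refine add_le_add happroxg2 ?_
          rw [hsum_eq]
          exact eLpNorm_sum_le (fun i _ =>
            (((hh_cont i).comp ((continuous_apply i).comp continuous_snd)).sub
              ((hhm_cont i).comp
                ((continuous_apply i).comp continuous_snd))).aestronglyMeasurable) hpE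
      _ ≤ ENNReal.ofReal ε + ∑ _i : Fin d, ENNReal.ofReal ε := by
          refine add_le_add le_rfl (Finset.sum_le_sum fun i _ => happrox2 i)
      _ = ENNReal.ofReal ((d+1)*ε) := by
          rw [Finset.sum_const, Finset.card_univ, Fintype.card_fin]
          rw [show ((d:ℝ)+1)*ε = ε + d*ε by ring,
            ENNReal.ofReal_add hε.le (by positivity), nsmul_eq_mul,
            ENNReal.ofReal_mul (by positivity : (0:ℝ) ≤ (d:ℝ))]
          simp
  have hεd1 : (0:ℝ) ≤ (d+1)*ε := by positivity
  -- eLpNorm of T and finiteness of the penalty integral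
  have hTne : eLpNorm (fun q : (∀ i, Fin (N i) → ℝ) × (∀ i, Fin (N i) → ℝ) =>
      f q.2 - g q.1 - (∑ i, h i (q.2 i)) - lam * c q.1 q.2) p θ ≠ ⊤ := hmoments.2.ne
  have hM0eq : eLpNorm (fun q : (∀ i, Fin (N i) → ℝ) × (∀ i, Fin (N i) → ℝ) =>
      f q.2 - g q.1 - (∑ i, h i (q.2 i)) - lam * c q.1 q.2) p θ = ENNReal.ofReal M0 := (ENNReal.ofReal_toReal hTne).symm
  -- bound for eLpNorm of (max T 0 + |δ|)
  have hbu : eLpNorm (fun q : (∀ i, Fin (N i) → ℝ) × (∀ i, Fin (N i) → ℝ) =>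
      max (f q.2 - g q.1 - (∑ i, h i (q.2 i)) - lam * c q.1 q.2) 0 + |(g q.1 - gm q.1) + ∑ i, (h i (q.2 i) - hm i (q.2 i))|) p θ ≤ ENNReal.ofReal (M0 + d + 1) := by
    calc eLpNorm (fun q : (∀ i, Fin (N i) → ℝ) × (∀ i, Fin (N i) → ℝ) =>
          max (f q.2 - g q.1 - (∑ i, h i (q.2 i)) - lam * c q.1 q.2) 0 + |(g q.1 - gm q.1) + ∑ i, (h i (q.2 i) - hm i (q.2 i))|) p θ
        ≤ eLpNorm (fun q : (∀ i, Fin (N i) → ℝ) × (∀ i, Fin (N i) → ℝ) =>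
            |f q.2 - g q.1 - (∑ i, h i (q.2 i)) - lam * c q.1 q.2| + |(g q.1 - gm q.1) + ∑ i, (h i (q.2 i) - hm i (q.2 i))|) p θ := by
          apply eLpNorm_mono_real
          intro q
          rw [Real.norm_eq_abs, abs_of_nonneg (add_nonneg (le_max_right _ _) (abs_nonneg _))]
          have h1 : max (f q.2 - g q.1 - (∑ i, h i (q.2 i)) - lam * c q.1 q.2) 0 ≤ |f q.2 - g q.1 - (∑ i, h i (q.2 i)) - lam * c q.1 q.2| :=
            max_le (le_abs_self _) (abs_nonneg _)
          linarith
      _ ≤ eLpNorm (fun q : (∀ i, Fin (N i) → ℝ) × (∀ i, Fin (N i) → ℝ) => |f q.2 - g q.1 - (∑ i, h i (q.2 i)) - lam * c q.1 q.2|) p θ +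
          eLpNorm (fun q : (∀ i, Fin (N i) → ℝ) × (∀ i, Fin (N i) → ℝ) => |(g q.1 - gm q.1) + ∑ i, (h i (q.2 i) - hm i (q.2 i))|) p θ := by
          exact eLpNorm_add_le (hTcont.abs.aestronglyMeasurable)
            (hδcont.abs.aestronglyMeasurable) hpE
      _ = eLpNorm (fun q : (∀ i, Fin (N i) → ℝ) × (∀ i, Fin (N i) → ℝ) => f q.2 - g q.1 - (∑ i, h i (q.2 i)) - lam * c q.1 q.2) p θ +
          eLpNorm (fun q : (∀ i, Fin (N i) → ℝ) × (∀ i, Fin (N i) → ℝ) => (g q.1 - gm q.1) + ∑ i, (h i (q.2 i) - hm i (q.2 i))) p θ := by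
          simp only [← Real.norm_eq_abs, eLpNorm_norm]
      _ ≤ ENNReal.ofReal M0 + ENNReal.ofReal ((d+1)*ε) := by
          rw [← hM0eq]
          exact add_le_add le_rfl hδnorm
      _ = ENNReal.ofReal (M0 + (d+1)*ε) := (ENNReal.ofReal_add hM0nn hεd1).symm
      _ ≤ ENNReal.ofReal (M0 + d + 1) := by
          apply ENNReal.ofReal_le_ofReal
          nlinarith
  -- lintegral bounds
  have hInt1 : ∫⁻ q, ENNReal.ofReal ((max (f q.2 - g q.1 - (∑ i, h i (q.2 i)) - lam * c q.1 q.2) 0 + |(g q.1 - gm q.1) + ∑ i, (h i (q.2 i) - hm i (q.2 i))|)^p) ∂θ ≤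
      ENNReal.ofReal ((M0 + d + 1)^p) := by
    rw [lintegral_pow_eq p hp1 θ _
      (fun q => add_nonneg (le_max_right _ _) (abs_nonneg _))]
    calc (eLpNorm (fun q : (∀ i, Fin (N i) → ℝ) × (∀ i, Fin (N i) → ℝ) =>
          max (f q.2 - g q.1 - (∑ i, h i (q.2 i)) - lam * c q.1 q.2) 0 + |(g q.1 - gm q.1) + ∑ i, (h i (q.2 i) - hm i (q.2 i))|) p θ) ^ (p:ℝ)
        ≤ (ENNReal.ofReal (M0 + d + 1)) ^ (p:ℝ) :=
          ENNReal.rpow_le_rpow hbu hpR.le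
      _ = ENNReal.ofReal ((M0 + d + 1)^p) := by
          rw [ENNReal.ofReal_rpow_of_nonneg (by positivity) hpR.le, Real.rpow_natCast]
  have hInt2 : ∫⁻ q, ENNReal.ofReal (|(g q.1 - gm q.1) + ∑ i, (h i (q.2 i) - hm i (q.2 i))|^p) ∂θ ≤
      ENNReal.ofReal ((d+1)^p * ε^p) := by
    rw [lintegral_pow_eq p hp1 θ _ (fun q => abs_nonneg _)]
    have heq : eLpNorm (fun q : (∀ i, Fin (N i) → ℝ) × (∀ i, Fin (N i) → ℝ) => |(g q.1 - gm q.1) + ∑ i, (h i (q.2 i) - hm i (q.2 i))|) p θ =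
        eLpNorm (fun q : (∀ i, Fin (N i) → ℝ) × (∀ i, Fin (N i) → ℝ) => (g q.1 - gm q.1) + ∑ i, (h i (q.2 i) - hm i (q.2 i))) p θ := by
      simp only [← Real.norm_eq_abs, eLpNorm_norm]
    rw [heq]
    calc (eLpNorm (fun q : (∀ i, Fin (N i) → ℝ) × (∀ i, Fin (N i) → ℝ) => (g q.1 - gm q.1) + ∑ i, (h i (q.2 i) - hm i (q.2 i))) p θ) ^ (p:ℝ)
        ≤ (ENNReal.ofReal ((d+1)*ε)) ^ (p:ℝ) := ENNReal.rpow_le_rpow hδnorm hpR.le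
      _ = ENNReal.ofReal ((d+1)^p * ε^p) := by
          rw [ENNReal.ofReal_rpow_of_nonneg hεd1 hpR.le, Real.rpow_natCast, mul_pow]
  -- finiteness of the optimal penalty integral
  have hIfin : ∫⁻ q, ENNReal.ofReal (γ^(p-1) * max (f q.2 - g q.1 - (∑ i, h i (q.2 i)) - lam * c q.1 q.2) 0 ^ p) ∂θ ≠ ⊤ := by
    have hle : ∫⁻ q, ENNReal.ofReal (γ^(p-1) * max (f q.2 - g q.1 - (∑ i, h i (q.2 i)) - lam * c q.1 q.2) 0 ^ p) ∂θ ≤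
        ENNReal.ofReal (γ^(p-1)) * ENNReal.ofReal (M0 ^ p) := by
      calc ∫⁻ q, ENNReal.ofReal (γ^(p-1) * max (f q.2 - g q.1 - (∑ i, h i (q.2 i)) - lam * c q.1 q.2) 0 ^ p) ∂θ
          ≤ ∫⁻ q, ENNReal.ofReal (γ^(p-1)) * ENNReal.ofReal (|f q.2 - g q.1 - (∑ i, h i (q.2 i)) - lam * c q.1 q.2| ^ p) ∂θ := by
            apply lintegral_mono
            intro q
            dsimp only
            rw [← ENNReal.ofReal_mul hγp]
            apply ENNReal.ofReal_le_ofReal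
            apply mul_le_mul_of_nonneg_left _ hγp
            exact pow_le_pow_left₀ (le_max_right _ _)
              (max_le (le_abs_self _) (abs_nonneg _)) p
        _ = ENNReal.ofReal (γ^(p-1)) * ∫⁻ q, ENNReal.ofReal (|f q.2 - g q.1 - (∑ i, h i (q.2 i)) - lam * c q.1 q.2| ^ p) ∂θ :=
            lintegral_const_mul' _ _ ENNReal.ofReal_ne_top
        _ ≤ ENNReal.ofReal (γ^(p-1)) * ENNReal.ofReal (M0 ^ p) := by
            apply mul_le_mul_right
            rw [lintegral_pow_eq p hp1 θ _ (fun q => abs_nonneg _)]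
            have heq : eLpNorm (fun q : (∀ i, Fin (N i) → ℝ) × (∀ i, Fin (N i) → ℝ) => |f q.2 - g q.1 - (∑ i, h i (q.2 i)) - lam * c q.1 q.2|) p θ =
                eLpNorm (fun q : (∀ i, Fin (N i) → ℝ) × (∀ i, Fin (N i) → ℝ) => f q.2 - g q.1 - (∑ i, h i (q.2 i)) - lam * c q.1 q.2) p θ := by
              simp only [← Real.norm_eq_abs, eLpNorm_norm]
            rw [heq, hM0eq, ENNReal.ofReal_rpow_of_nonneg hM0nn hpR.le, Real.rpow_natCast]
    exact ne_top_of_le_ne_top (by finiteness) hle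
  -- the key constant computation
  have hKnn : (0:ℝ) ≤ (M0 + d + 1)^p := pow_nonneg (by positivity) _
  have hBnn : (0:ℝ) ≤ γ^(p-1) * p * ((M0 + d + 1)^p + (d+1)^p) := by
    have h2 : (0:ℝ) ≤ ((d:ℝ)+1)^p := by positivity
    have h3 : (0:ℝ) ≤ γ^(p-1) * (p:ℝ) := by positivity
    nlinarith
  have hkey : γ^(p-1)*(p:ℝ)*ε*((M0+d+1)^p) + γ^(p-1)*(p:ℝ)/ε^(p-1)*((d+1)^p*ε^p)
      = γ^(p-1)*p*((M0+d+1)^p+(d+1)^p)*ε := by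
    have hεp : ε^p = ε^(p-1)*ε := by
      rw [← pow_succ]
      congr 1
      omega
    have hεne : ε^(p-1) ≠ 0 := by positivity
    field_simp [hεp]
    rw [hεp]
    ring
  -- main penalty estimate
  have hIm_le : ∫⁻ q, ENNReal.ofReal (γ^(p-1) * max ((f q.2 - g q.1 - (∑ i, h i (q.2 i)) - lam * c q.1 q.2) + ((g q.1 - gm q.1) + ∑ i, (h i (q.2 i) - hm i (q.2 i)))) 0 ^ p) ∂θ ≤
      (∫⁻ q, ENNReal.ofReal (γ^(p-1) * max (f q.2 - g q.1 - (∑ i, h i (q.2 i)) - lam * c q.1 q.2) 0 ^ p) ∂θ) +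
      ENNReal.ofReal (γ^(p-1)*p*((M0+d+1)^p+(d+1)^p)*ε) := by
    have hmeasB : Measurable fun q : (∀ i, Fin (N i) → ℝ) × (∀ i, Fin (N i) → ℝ) =>
        ENNReal.ofReal (γ^(p-1)*(p:ℝ)*ε) * ENNReal.ofReal ((max (f q.2 - g q.1 - (∑ i, h i (q.2 i)) - lam * c q.1 q.2) 0 + |(g q.1 - gm q.1) + ∑ i, (h i (q.2 i) - hm i (q.2 i))|)^p) :=
      (ENNReal.measurable_ofReal.comp
        (((hTcont.max continuous_const).add hδcont.abs).pow p).measurable).const_mul _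
    have hmeasC : Measurable fun q : (∀ i, Fin (N i) → ℝ) × (∀ i, Fin (N i) → ℝ) =>
        ENNReal.ofReal (γ^(p-1)*(p:ℝ)/ε^(p-1)) * ENNReal.ofReal (|(g q.1 - gm q.1) + ∑ i, (h i (q.2 i) - hm i (q.2 i))|^p) :=
      (ENNReal.measurable_ofReal.comp
        (hδcont.abs.pow p).measurable).const_mul _
    have hk1 : (0:ℝ) ≤ γ^(p-1)*(p:ℝ)*ε := by positivity
    have hk2 : (0:ℝ) ≤ γ^(p-1)*(p:ℝ)/ε^(p-1) := by positivity
    calc ∫⁻ q, ENNReal.ofReal (γ^(p-1) * max ((f q.2 - g q.1 - (∑ i, h i (q.2 i)) - lam * c q.1 q.2) + ((g q.1 - gm q.1) + ∑ i, (h i (q.2 i) - hm i (q.2 i)))) 0 ^ p) ∂θ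
        ≤ ∫⁻ q, (ENNReal.ofReal (γ^(p-1) * max (f q.2 - g q.1 - (∑ i, h i (q.2 i)) - lam * c q.1 q.2) 0 ^ p) +
            ENNReal.ofReal (γ^(p-1)*(p:ℝ)*ε) * ENNReal.ofReal ((max (f q.2 - g q.1 - (∑ i, h i (q.2 i)) - lam * c q.1 q.2) 0 + |(g q.1 - gm q.1) + ∑ i, (h i (q.2 i) - hm i (q.2 i))|)^p) +
            ENNReal.ofReal (γ^(p-1)*(p:ℝ)/ε^(p-1)) * ENNReal.ofReal (|(g q.1 - gm q.1) + ∑ i, (h i (q.2 i) - hm i (q.2 i))|^p)) ∂θ := by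
          apply lintegral_mono
          intro q
          dsimp only
          have hpt := pointwise_pen p hp hγ hε (f q.2 - g q.1 - (∑ i, h i (q.2 i)) - lam * c q.1 q.2) ((g q.1 - gm q.1) + ∑ i, (h i (q.2 i) - hm i (q.2 i)))
          calc ENNReal.ofReal (γ^(p-1) * max ((f q.2 - g q.1 - (∑ i, h i (q.2 i)) - lam * c q.1 q.2) + ((g q.1 - gm q.1) + ∑ i, (h i (q.2 i) - hm i (q.2 i)))) 0 ^ p)
              ≤ ENNReal.ofReal (γ^(p-1) * max (f q.2 - g q.1 - (∑ i, h i (q.2 i)) - lam * c q.1 q.2) 0 ^ p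
                  + γ^(p-1) * (p:ℝ) * ε * (max (f q.2 - g q.1 - (∑ i, h i (q.2 i)) - lam * c q.1 q.2) 0 + |(g q.1 - gm q.1) + ∑ i, (h i (q.2 i) - hm i (q.2 i))|)^p
                  + γ^(p-1) * (p:ℝ) / ε^(p-1) * |(g q.1 - gm q.1) + ∑ i, (h i (q.2 i) - hm i (q.2 i))|^p) := ENNReal.ofReal_le_ofReal hpt
            _ = ENNReal.ofReal (γ^(p-1) * max (f q.2 - g q.1 - (∑ i, h i (q.2 i)) - lam * c q.1 q.2) 0 ^ p) +
                ENNReal.ofReal (γ^(p-1)*(p:ℝ)*ε) * ENNReal.ofReal ((max (f q.2 - g q.1 - (∑ i, h i (q.2 i)) - lam * c q.1 q.2) 0 + |(g q.1 - gm q.1) + ∑ i, (h i (q.2 i) - hm i (q.2 i))|)^p) +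
                ENNReal.ofReal (γ^(p-1)*(p:ℝ)/ε^(p-1)) * ENNReal.ofReal (|(g q.1 - gm q.1) + ∑ i, (h i (q.2 i) - hm i (q.2 i))|^p) := by
                rw [ENNReal.ofReal_add (by positivity) (by positivity),
                  ENNReal.ofReal_add (by positivity) (by positivity),
                  ENNReal.ofReal_mul hk1, ENNReal.ofReal_mul hk2]
      _ = (∫⁻ q, ENNReal.ofReal (γ^(p-1) * max (f q.2 - g q.1 - (∑ i, h i (q.2 i)) - lam * c q.1 q.2) 0 ^ p) ∂θ) +
          ENNReal.ofReal (γ^(p-1)*(p:ℝ)*ε) *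
            (∫⁻ q, ENNReal.ofReal ((max (f q.2 - g q.1 - (∑ i, h i (q.2 i)) - lam * c q.1 q.2) 0 + |(g q.1 - gm q.1) + ∑ i, (h i (q.2 i) - hm i (q.2 i))|)^p) ∂θ) +
          ENNReal.ofReal (γ^(p-1)*(p:ℝ)/ε^(p-1)) *
            (∫⁻ q, ENNReal.ofReal (|(g q.1 - gm q.1) + ∑ i, (h i (q.2 i) - hm i (q.2 i))|^p) ∂θ) := by
          rw [lintegral_add_right _ hmeasC, lintegral_add_right _ hmeasB,
            lintegral_const_mul' _ _ ENNReal.ofReal_ne_top,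
            lintegral_const_mul' _ _ ENNReal.ofReal_ne_top]
      _ ≤ (∫⁻ q, ENNReal.ofReal (γ^(p-1) * max (f q.2 - g q.1 - (∑ i, h i (q.2 i)) - lam * c q.1 q.2) 0 ^ p) ∂θ) +
          ENNReal.ofReal (γ^(p-1)*(p:ℝ)*ε) * ENNReal.ofReal ((M0 + d + 1)^p) +
          ENNReal.ofReal (γ^(p-1)*(p:ℝ)/ε^(p-1)) * ENNReal.ofReal ((d+1)^p * ε^p) := by
          gcongr
      _ = (∫⁻ q, ENNReal.ofReal (γ^(p-1) * max (f q.2 - g q.1 - (∑ i, h i (q.2 i)) - lam * c q.1 q.2) 0 ^ p) ∂θ) +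
          ENNReal.ofReal (γ^(p-1)*p*((M0+d+1)^p+(d+1)^p)*ε) := by
          rw [add_assoc, ← ENNReal.ofReal_mul hk1, ← ENNReal.ofReal_mul hk2,
            ← ENNReal.ofReal_add (by nlinarith) (by positivity), hkey]
  have hImfin : ∫⁻ q, ENNReal.ofReal (γ^(p-1) * max ((f q.2 - g q.1 - (∑ i, h i (q.2 i)) - lam * c q.1 q.2) + ((g q.1 - gm q.1) + ∑ i, (h i (q.2 i) - hm i (q.2 i)))) 0 ^ p) ∂θ ≠ ⊤ :=
    ne_top_of_le_ne_top (ENNReal.add_ne_top.mpr ⟨hIfin, ENNReal.ofReal_ne_top⟩) hIm_le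
  -- rewriting the NN integrand
  have hTm_eq : ∀ q : (∀ i, Fin (N i) → ℝ) × (∀ i, Fin (N i) → ℝ),
      f q.2 - gm q.1 - (∑ i, hm i (q.2 i)) - lam * c q.1 q.2 = ((f q.2 - g q.1 - (∑ i, h i (q.2 i)) - lam * c q.1 q.2) + ((g q.1 - gm q.1) + ∑ i, (h i (q.2 i) - hm i (q.2 i)))) := by
    intro q
    simp only [Finset.sum_sub_distrib]
    ring
  have hIntegrand_eq : (∫⁻ q, ENNReal.ofReal (γ^(p-1) * max (f q.2 - gm q.1 - (∑ i, hm i (q.2 i)) - lam * c q.1 q.2) 0 ^ p) ∂θ) =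
      ∫⁻ q, ENNReal.ofReal (γ^(p-1) * max ((f q.2 - g q.1 - (∑ i, h i (q.2 i)) - lam * c q.1 q.2) + ((g q.1 - gm q.1) + ∑ i, (h i (q.2 i) - hm i (q.2 i)))) 0 ^ p) ∂θ :=
    lintegral_congr fun q => by rw [hTm_eq q]
  -- the candidate value bound for phiPenNN
  have hNNle : phiPenNN σ m μbar θ c ρ (fun x => γ^(p-1) * max x 0 ^ p) (fun q => f q.2) ≤
      ((lam * ρ + (∑ i, ∫ x, hm i x ∂(μbar.map (fun y => y i))) + ∫ x, gm x ∂μbar : ℝ) : EReal) +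
      (∫⁻ q, ENNReal.ofReal (γ^(p-1) * max (f q.2 - gm q.1 - (∑ i, hm i (q.2 i)) - lam * c q.1 q.2) 0 ^ p) ∂θ).toEReal := by
    apply sInf_le
    exact ⟨lam, hm, gm, hlam_nonneg, hNNh, hNNg, rfl⟩
  constructor
  · -- phiPenNN ≤ phiPen + Cε
    rw [← hopt]
    refine le_trans hNNle ?_
    rw [hIntegrand_eq, ennreal_toEReal_eq hImfin, ennreal_toEReal_eq hIfin,
      ← EReal.coe_add, ← EReal.coe_add, ← EReal.coe_add]
    apply EReal.coe_le_coe_iff.mpr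
    have hpen_real : (∫⁻ q, ENNReal.ofReal (γ^(p-1) * max ((f q.2 - g q.1 - (∑ i, h i (q.2 i)) - lam * c q.1 q.2) + ((g q.1 - gm q.1) + ∑ i, (h i (q.2 i) - hm i (q.2 i)))) 0 ^ p) ∂θ).toReal ≤
        (∫⁻ q, ENNReal.ofReal (γ^(p-1) * max (f q.2 - g q.1 - (∑ i, h i (q.2 i)) - lam * c q.1 q.2) 0 ^ p) ∂θ).toReal +
        γ^(p-1)*p*((M0+d+1)^p+(d+1)^p)*ε := by
      have h1 := ENNReal.toReal_mono (ENNReal.add_ne_top.mpr ⟨hIfin, ENNReal.ofReal_ne_top⟩)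
        hIm_le
      rwa [ENNReal.toReal_add hIfin ENNReal.ofReal_ne_top,
        ENNReal.toReal_ofReal (by nlinarith)] at h1
    have hSum : ∑ i, ∫ x, hm i x ∂(μbar.map (fun y => y i)) ≤
        (∑ i, ∫ x, h i x ∂(μbar.map (fun y => y i))) + d * ε := by
      calc ∑ i, ∫ x, hm i x ∂(μbar.map (fun y => y i))
          ≤ ∑ i, ((∫ x, h i x ∂(μbar.map (fun y => y i))) + ε) :=
            Finset.sum_le_sum fun i _ => hlin_i i
        _ = (∑ i, ∫ x, h i x ∂(μbar.map (fun y => y i))) + d * ε := by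
            rw [Finset.sum_add_distrib, Finset.sum_const, Finset.card_univ,
              Fintype.card_fin, nsmul_eq_mul]
    have hCε : ((d:ℝ)+1 + γ^(p-1) * p * ((M0 + d + 1)^p + (d+1)^p)) * ε =
        ((d:ℝ)*ε + ε) + γ^(p-1)*p*((M0+d+1)^p+(d+1)^p)*ε := by ring
    rw [hCε]
    linarith [hling, hpen_real, hSum]
  · -- phiPen ≤ phiPenNN + Cε
    have hmono : phiPen μbar θ c ρ (fun x => γ^(p-1) * max x 0 ^ p) (fun q => f q.2) ≤
        phiPenNN σ m μbar θ c ρ (fun x => γ^(p-1) * max x 0 ^ p) (fun q => f q.2) := by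
      apply sInf_le_sInf
      rintro w ⟨lam', h', g', hl', hNN', hNNg', rfl⟩
      exact ⟨lam', h', g', hl', fun i => nn_cont hσ_cont (hNN' i),
        fun i => nn_bdd hσ_bdd (hNN' i), nn_cont hσ_cont hNNg', nn_bdd hσ_bdd hNNg', rfl⟩
    refine le_trans hmono ?_
    nth_rewrite 1 [← add_zero (phiPenNN σ m μbar θ c ρ
      (fun x => γ^(p-1) * max x 0 ^ p) (fun q => f q.2))]
    exact add_le_add le_rfl (EReal.coe_nonneg.mpr (mul_nonneg hCnn hε.le))


end Penalized
end
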